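/- arXiv:0802.3153 — 6 statements merged into one kernel-verified Lean document; each statement's English description precedes it below -/
import Mathlib

section
/- There is a constant K ≥ 0 depending only on M, δ, p, T (one may take K = 2^{p−1}(M^{p+1}T + 2M)/δ + M^p T) such that, for any x₀ ∈ ℝ^N, any t₀ ∈ [0,T), and any curve x̄ that is optimal for the initial condition (x₀, t₀) (i.e. x̄ attains the infimum defining u(x₀,t₀)), one has ∫_{t₀}^T |x̄'(s)|^p ds ≤ K. -/
open MeasureTheory Set intervalIntegral

noncomputable section

/-- The curve starting at `x` at time `t` with (a.e.) derivative `v`. -/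
def curveOf {N : ℕ} (x : EuclideanSpace ℝ (Fin N)) (t : ℝ)
    (v : ℝ → EuclideanSpace ℝ (Fin N)) : ℝ → EuclideanSpace ℝ (Fin N) :=
  fun s => x + ∫ r in t..s, v r

/-- The cost of the curve starting at `x` at time `t` with derivative `v`:
`∫_t^T a(x(s),s) |f(x(s),s) + x'(s)|^p ds + g(x(T))`. -/
def costOf {N : ℕ} (T p : ℝ) (a : EuclideanSpace ℝ (Fin N) → ℝ → ℝ)
    (f : EuclideanSpace ℝ (Fin N) → ℝ → EuclideanSpace ℝ (Fin N))
    (g : EuclideanSpace ℝ (Fin N) → ℝ)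
    (x : EuclideanSpace ℝ (Fin N)) (t : ℝ) (v : ℝ → EuclideanSpace ℝ (Fin N)) : ℝ :=
  (∫ s in t..T, a (curveOf x t v s) s * ‖f (curveOf x t v s) s + v s‖ ^ p)
    + g (curveOf x t v T)

/-- A curve (given through its derivative `v`) is admissible for initial time `t` if its
derivative belongs to `L^p([t,T])`. -/
def AdmissibleDeriv {N : ℕ} (T p t : ℝ) (v : ℝ → EuclideanSpace ℝ (Fin N)) : Prop :=
  MemLp v (ENNReal.ofReal p) (volume.restrict (Icc t T))

/-- The value function of the calculus of variations problem. -/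
def valueFn {N : ℕ} (T p : ℝ) (a : EuclideanSpace ℝ (Fin N) → ℝ → ℝ)
    (f : EuclideanSpace ℝ (Fin N) → ℝ → EuclideanSpace ℝ (Fin N))
    (g : EuclideanSpace ℝ (Fin N) → ℝ)
    (x : EuclideanSpace ℝ (Fin N)) (t : ℝ) : ℝ :=
  sInf {c : ℝ | ∃ v, AdmissibleDeriv T p t v ∧ costOf T p a f g x t v = c}

/-- A curve (given through its derivative `v`) is optimal for the initial condition `(x, t)`
if it is admissible and its cost realizes the infimum defining `valueFn`. -/
def IsOptimalCurve {N : ℕ} (T p : ℝ) (a : EuclideanSpace ℝ (Fin N) → ℝ → ℝ)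
    (f : EuclideanSpace ℝ (Fin N) → ℝ → EuclideanSpace ℝ (Fin N))
    (g : EuclideanSpace ℝ (Fin N) → ℝ)
    (x : EuclideanSpace ℝ (Fin N)) (t : ℝ) (v : ℝ → EuclideanSpace ℝ (Fin N)) : Prop :=
  AdmissibleDeriv T p t v ∧ costOf T p a f g x t v = valueFn T p a f g x t

/-- The standing assumptions : `a`, `f`, `g` are continuous, bounded by `M`, and `a ≥ δ`. -/
def StandardHyps {N : ℕ} (T M δ : ℝ) (a : EuclideanSpace ℝ (Fin N) → ℝ → ℝ)
    (f : EuclideanSpace ℝ (Fin N) → ℝ → EuclideanSpace ℝ (Fin N))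
    (g : EuclideanSpace ℝ (Fin N) → ℝ) : Prop :=
  ContinuousOn (fun q : EuclideanSpace ℝ (Fin N) × ℝ => a q.1 q.2) (univ ×ˢ Icc 0 T) ∧
  ContinuousOn (fun q : EuclideanSpace ℝ (Fin N) × ℝ => f q.1 q.2) (univ ×ˢ Icc 0 T) ∧
  Continuous g ∧
  (∀ x t, t ∈ Icc 0 T → |a x t| ≤ M) ∧
  (∀ x t, t ∈ Icc 0 T → ‖f x t‖ ≤ M) ∧
  (∀ x, |g x| ≤ M) ∧
  (∀ x t, t ∈ Icc 0 T → δ ≤ a x t)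

namespace BoundSolAux

private lemma rpow_add_le_two_rpow (p : ℝ) (hp : 1 ≤ p) {A B : ℝ} (hA : 0 ≤ A) (hB : 0 ≤ B) :
    (A + B) ^ p ≤ 2 ^ (p - 1) * (A ^ p + B ^ p) := by
  lift A to NNReal using hA
  lift B to NNReal using hB
  exact_mod_cast NNReal.rpow_add_le_mul_rpow_add_rpow A B hp

private lemma bddBelow_costSet {N : ℕ}
    (T p M δ : ℝ) (hδ : 0 < δ)
    (a : EuclideanSpace ℝ (Fin N) → ℝ → ℝ)
    (f : EuclideanSpace ℝ (Fin N) → ℝ → EuclideanSpace ℝ (Fin N))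
    (g : EuclideanSpace ℝ (Fin N) → ℝ)
    (hgM : ∀ x, |g x| ≤ M)
    (hδa : ∀ x t, t ∈ Icc 0 T → δ ≤ a x t)
    (x₀ : EuclideanSpace ℝ (Fin N)) (t₀ : ℝ) (ht₀ : t₀ ∈ Icc 0 T) :
    BddBelow {c : ℝ | ∃ v, AdmissibleDeriv T p t₀ v ∧ costOf T p a f g x₀ t₀ v = c} := by
  refine ⟨-M, ?_⟩
  rintro c ⟨v, -, rfl⟩
  have h1 : 0 ≤ ∫ s in t₀..T, a (curveOf x₀ t₀ v s) s * ‖f (curveOf x₀ t₀ v s) s + v s‖ ^ p := by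
    refine intervalIntegral.integral_nonneg ht₀.2 fun u hu => ?_
    have hu' : u ∈ Icc 0 T := ⟨ht₀.1.trans hu.1, hu.2⟩
    exact mul_nonneg (hδ.le.trans (hδa _ _ hu')) (Real.rpow_nonneg (norm_nonneg _) p)
  have h2 : -M ≤ g (curveOf x₀ t₀ v T) := (abs_le.1 (hgM _)).1
  have : (-M : ℝ) = 0 + -M := by ring
  rw [this]
  exact add_le_add h1 h2

set_option maxHeartbeats 1000000 in
private lemma valueFn_le {N : ℕ}
    (T p M δ : ℝ) (hT : 0 < T) (hp : 1 < p) (hM : 0 < M) (hδ : 0 < δ)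
    (a : EuclideanSpace ℝ (Fin N) → ℝ → ℝ)
    (f : EuclideanSpace ℝ (Fin N) → ℝ → EuclideanSpace ℝ (Fin N))
    (g : EuclideanSpace ℝ (Fin N) → ℝ)
    (hyp : StandardHyps T M δ a f g)
    (x₀ : EuclideanSpace ℝ (Fin N)) (t₀ : ℝ) (ht₀ : t₀ ∈ Ico 0 T)
    (ε : ℝ) (hε : 0 < ε) :
    valueFn T p a f g x₀ t₀ ≤ M * ε ^ p * T + M := by
  obtain ⟨ha, hf, hg, haM, hfM, hgM, hδa⟩ := hyp
  have hT0 : (0:ℝ) ≤ T := hT.le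
  have ht₀T : t₀ < T := ht₀.2
  have ht₀0 : 0 ≤ t₀ := ht₀.1
  set R := M * T with hR
  -- uniform continuity of f on a compact set
  have hcompact : IsCompact ((Metric.closedBall x₀ R ×ˢ Icc 0 T :
      Set (EuclideanSpace ℝ (Fin N) × ℝ))) :=
    (isCompact_closedBall x₀ R).prod isCompact_Icc
  have hfc : ContinuousOn (fun q : EuclideanSpace ℝ (Fin N) × ℝ => f q.1 q.2)
      (Metric.closedBall x₀ R ×ˢ Icc 0 T) :=
    hf.mono (prod_mono (subset_univ _) Subset.rfl)
  obtain ⟨d, hd, hUC⟩ := (Metric.uniformContinuousOn_iff.1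
    (hcompact.uniformContinuousOn_of_continuous hfc)) ε hε
  -- choice of the mesh
  obtain ⟨n, hn⟩ := exists_nat_gt (max 1 (M * (T - t₀) / d))
  have hn1 : (1:ℝ) < n := lt_of_le_of_lt (le_max_left _ _) hn
  have hnpos : 0 < (n:ℝ) := by linarith
  have hnN : 1 ≤ n := by exact_mod_cast hn1.le
  set h := (T - t₀) / n with hh
  have hhpos : 0 < h := div_pos (by linarith) hnpos
  have hMh : M * h < d := by
    have h1 : M * (T - t₀) / d < n := (le_max_right _ _).trans_lt hn
    rw [div_lt_iff₀ hd] at h1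
    rw [hh, mul_div_assoc', div_lt_iff₀ hnpos]
    linarith
  set tI : ℕ → ℝ := fun i => t₀ + i * h with htI
  have tI0 : tI 0 = t₀ := by simp [htI]
  have tIn : tI n = T := by
    simp only [htI, hh]
    field_simp
    ring
  have tI_mono : ∀ {i j : ℕ}, i ≤ j → tI i ≤ tI j := by
    intro i j hij
    simp only [htI]
    have hcast : (i:ℝ) ≤ j := Nat.cast_le.2 hij
    nlinarith [hhpos.le]
  have tI_step : ∀ i : ℕ, tI (i+1) = tI i + h := by
    intro i; simp only [htI]; push_cast; ring
  have tI_lt : ∀ i : ℕ, tI i < tI (i+1) := fun i => by rw [tI_step]; linarith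
  have tI_ge : ∀ i : ℕ, t₀ ≤ tI i := fun i => by
    simpa [tI0] using tI_mono (Nat.zero_le i)
  have tI_le : ∀ i : ℕ, i ≤ n → tI i ≤ T := fun i hi => tIn ▸ tI_mono hi
  -- clamping time to [0, T]
  set clamp : ℝ → ℝ := fun r => max 0 (min T r) with hclamp
  have clamp_mem : ∀ r, clamp r ∈ Icc 0 T :=
    fun r => ⟨le_max_left _ _, max_le hT0 (min_le_left _ _)⟩
  have clamp_eq : ∀ r ∈ Icc 0 T, clamp r = r := fun r hr => by
    simp only [hclamp]; rw [min_eq_right hr.2, max_eq_right hr.1]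
  have clamp_cont : Continuous clamp := continuous_const.max (continuous_const.min continuous_id)
  have fc_cont : ∀ y : EuclideanSpace ℝ (Fin N), Continuous fun r => f y (clamp r) := by
    intro y
    have hcont : Continuous fun r : ℝ => ((y, clamp r) : EuclideanSpace ℝ (Fin N) × ℝ) :=
      continuous_const.prodMk clamp_cont
    exact hf.comp_continuous hcont fun r => ⟨mem_univ _, clamp_mem r⟩
  -- Euler points
  set Y : ℕ → EuclideanSpace ℝ (Fin N) :=
    fun i => Nat.rec x₀ (fun i y => y - ∫ r in tI i..tI (i+1), f y (clamp r)) i with hY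
  have Ystep : ∀ i : ℕ, Y (i+1) = Y i - ∫ r in tI i..tI (i+1), f (Y i) (clamp r) := fun i => rfl
  -- the Euler derivative
  set v : ℝ → EuclideanSpace ℝ (Fin N) := fun s =>
    ∑ i ∈ Finset.range n, (Ioc (tI i) (tI (i+1))).indicator (fun r => -f (Y i) (clamp r)) s
    with hv
  have vmeas : StronglyMeasurable v :=
    Finset.stronglyMeasurable_fun_sum _ fun i _ =>
      ((fc_cont (Y i)).neg.stronglyMeasurable).indicator measurableSet_Ioc
  have vval : ∀ i < n, ∀ s ∈ Ioc (tI i) (tI (i+1)), v s = -f (Y i) (clamp s) := by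
    intro i hi s hs
    have hzero : ∀ j ∈ Finset.range n, j ≠ i →
        (Ioc (tI j) (tI (j+1))).indicator (fun r => -f (Y j) (clamp r)) s = 0 := by
      intro j _ hj
      refine indicator_of_notMem (fun hsj => ?_) _
      rcases lt_or_gt_of_ne hj with hlt | hgt
      · have h3 : tI (j+1) ≤ tI i := tI_mono (Nat.succ_le_of_lt hlt)
        have h1 := hs.1
        have h2 := hsj.2
        linarith
      · have h3 : tI (i+1) ≤ tI j := tI_mono (Nat.succ_le_of_lt hgt)
        have h1 := hs.2
        have h2 := hsj.1
        linarith
    have hsum : v s = ∑ j ∈ Finset.range n,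
        (Ioc (tI j) (tI (j+1))).indicator (fun r => -f (Y j) (clamp r)) s := rfl
    rw [hsum, Finset.sum_eq_single_of_mem i (Finset.mem_range.2 hi) hzero]
    exact indicator_of_mem hs _
  have vnorm : ∀ s, ‖v s‖ ≤ M := by
    intro s
    by_cases hs : ∃ i < n, s ∈ Ioc (tI i) (tI (i+1))
    · obtain ⟨i, hi, hsi⟩ := hs
      rw [vval i hi s hsi, norm_neg]
      exact hfM _ _ (clamp_mem s)
    · push_neg at hs
      have hz : v s = 0 := Finset.sum_eq_zero fun i hi =>
        indicator_of_notMem (hs i (Finset.mem_range.1 hi)) _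
      simp [hz, hM.le]
  have vint : ∀ b c : ℝ, IntervalIntegrable v volume b c := by
    intro b c
    have hbd : (fun s => ‖v s‖) ≤ᵐ[volume.restrict (Set.uIoc b c)] (fun _ => ‖(M:ℝ)‖) :=
      Filter.Eventually.of_forall fun s => by
        rw [Real.norm_eq_abs, abs_of_pos hM]
        exact vnorm s
    exact IntervalIntegrable.mono_fun (intervalIntegrable_const (c := M))
      vmeas.aestronglyMeasurable hbd
  -- the Euler curve
  set x : ℝ → EuclideanSpace ℝ (Fin N) := curveOf x₀ t₀ v with hx
  have hxs : ∀ s, x s = x₀ + ∫ r in t₀..s, v r := fun s => rfl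
  have hxt₀ : x t₀ = x₀ := by simp [hxs]
  have xY : ∀ i, i ≤ n → x (tI i) = Y i := by
    intro i hi
    induction i with
    | zero => rw [tI0]; exact hxt₀
    | succ k ih =>
      have hkn : k < n := Nat.lt_of_succ_le hi
      have hadd := intervalIntegral.integral_add_adjacent_intervals
        (vint t₀ (tI k)) (vint (tI k) (tI (k+1)))
      have hseg : (∫ r in tI k..tI (k+1), v r) = ∫ r in tI k..tI (k+1), -f (Y k) (clamp r) := by
        refine intervalIntegral.integral_congr_ae (Filter.Eventually.of_forall fun s hsI => ?_)
        rw [Set.uIoc_of_le (tI_lt k).le] at hsI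
        exact vval k hkn s hsI
      have e1 : x (tI (k+1)) = x (tI k) + ∫ r in tI k..tI (k+1), v r := by
        rw [hxs, hxs, ← hadd, add_assoc]
      rw [e1, ih (le_of_lt hkn), hseg, intervalIntegral.integral_neg, ← sub_eq_add_neg, ← Ystep]
  have xdiff : ∀ b c : ℝ, x c - x b = ∫ r in b..c, v r := by
    intro b c
    have hsub := intervalIntegral.integral_interval_sub_left (vint t₀ c) (vint t₀ b)
    rw [hxs, hxs]
    rw [add_sub_add_left_eq_sub]
    exact hsub
  have xbound : ∀ b c : ℝ, b ≤ c → ‖x c - x b‖ ≤ M * (c - b) := by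
    intro b c hbc
    rw [xdiff]
    have hnb := intervalIntegral.norm_integral_le_of_norm_le_const
      (C := M) (f := v) (a := b) (b := c) (fun r _ => vnorm r)
    rwa [abs_of_nonneg (by linarith)] at hnb
  have xball : ∀ s ∈ Icc t₀ T, x s ∈ Metric.closedBall x₀ R := by
    intro s hs
    have h1 : ‖x s - x₀‖ ≤ M * (s - t₀) := by
      have := xbound t₀ s hs.1
      rwa [hxt₀] at this
    rw [Metric.mem_closedBall, dist_eq_norm]
    have h2 : M * (s - t₀) ≤ M * T := by nlinarith [hs.2, ht₀0]
    calc ‖x s - x₀‖ ≤ M * (s - t₀) := h1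
      _ ≤ M * T := h2
  -- coverage of (t₀, T] by the mesh intervals
  have cov : ∀ s ∈ Ioc t₀ T, ∃ i < n, s ∈ Ioc (tI i) (tI (i+1)) := by
    intro s hs
    set r := (s - t₀) / h with hr
    have hr0 : 0 < r := div_pos (by linarith [hs.1]) hhpos
    have hrh : r * h = s - t₀ := by rw [hr]; field_simp
    have hrn : r ≤ n := by
      rw [hr, div_le_iff₀ hhpos]
      have hnh : (n:ℝ) * h = T - t₀ := by rw [hh]; field_simp
      linarith [hs.2]
    set c := ⌈r⌉₊ with hc
    have hc1 : 0 < c := Nat.ceil_pos.2 hr0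
    have hcn : c ≤ n := Nat.ceil_le.2 hrn
    have hceq : c - 1 + 1 = c := Nat.succ_pred_eq_of_pos hc1
    have hcast : ((c - 1 : ℕ) : ℝ) = (c:ℝ) - 1 := by
      push_cast [Nat.cast_sub hc1]
      ring
    refine ⟨c - 1, by omega, ?_, ?_⟩
    · have h1 : (c:ℝ) < r + 1 := Nat.ceil_lt_add_one hr0.le
      simp only [htI]
      rw [hcast]
      nlinarith
    · have h3 : r ≤ c := Nat.le_ceil r
      rw [hceq]
      simp only [htI]
      nlinarith
  -- pointwise bound on the running cost
  have keybound : ∀ s ∈ Ioc t₀ T,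
      |a (x s) s * ‖f (x s) s + v s‖ ^ p| ≤ M * ε ^ p := by
    intro s hs
    obtain ⟨i, hi, hsi⟩ := cov s hs
    have hsIcc : s ∈ Icc 0 T := ⟨ht₀0.trans hs.1.le, hs.2⟩
    have hvs : v s = -f (Y i) s := by rw [vval i hi s hsi, clamp_eq s hsIcc]
    have hYx : Y i = x (tI i) := (xY i (le_of_lt hi)).symm
    have hYball : Y i ∈ Metric.closedBall x₀ R := by
      rw [hYx]; exact xball _ ⟨tI_ge i, tI_le i (le_of_lt hi)⟩
    have hxball : x s ∈ Metric.closedBall x₀ R := xball s ⟨hs.1.le, hs.2⟩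
    have hdist : dist (x s) (Y i) < d := by
      rw [hYx, dist_eq_norm]
      have h1 : ‖x s - x (tI i)‖ ≤ M * (s - tI i) := xbound _ _ hsi.1.le
      have h2 : s - tI i ≤ h := by
        have h4 := hsi.2
        rw [tI_step i] at h4
        linarith
      have h5 : M * (s - tI i) ≤ M * h := by nlinarith [hsi.1.le, tI_ge i]
      linarith
    have hpd : dist ((x s, s) : EuclideanSpace ℝ (Fin N) × ℝ) ((Y i, s)) < d := by
      rw [Prod.dist_eq]
      simp only [dist_self]
      exact max_lt hdist hd
    have hlt : ‖f (x s) s - f (Y i) s‖ < ε := by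
      have huc := hUC (x s, s) ⟨hxball, hsIcc⟩ (Y i, s) ⟨hYball, hsIcc⟩ hpd
      rwa [dist_eq_norm] at huc
    have habs : |a (x s) s| ≤ M := haM _ _ hsIcc
    have hnn : (0:ℝ) ≤ ‖f (x s) s + v s‖ ^ p := Real.rpow_nonneg (norm_nonneg _) _
    rw [abs_mul, abs_of_nonneg hnn]
    have hle : ‖f (x s) s + v s‖ ^ p ≤ ε ^ p := by
      rw [hvs, ← sub_eq_add_neg]
      exact Real.rpow_le_rpow (norm_nonneg _) hlt.le (by linarith)
    exact mul_le_mul habs hle hnn hM.le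
  -- bound on the integral
  have Ibound : (∫ s in t₀..T, a (x s) s * ‖f (x s) s + v s‖ ^ p) ≤ M * ε ^ p * (T - t₀) := by
    have h1 : ‖∫ s in t₀..T, a (x s) s * ‖f (x s) s + v s‖ ^ p‖ ≤ M * ε ^ p * |T - t₀| :=
      intervalIntegral.norm_integral_le_of_norm_le_const (fun s hsI => by
        rw [Set.uIoc_of_le ht₀T.le] at hsI
        rw [Real.norm_eq_abs]
        exact keybound s hsI)
    rw [abs_of_nonneg (by linarith)] at h1
    exact (le_abs_self _).trans (by simpa [Real.norm_eq_abs] using h1)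
  have hadm : AdmissibleDeriv T p t₀ v :=
    MemLp.of_bound vmeas.aestronglyMeasurable M (Filter.Eventually.of_forall vnorm)
  have hcost : costOf T p a f g x₀ t₀ v ≤ M * ε ^ p * T + M := by
    have hg1 : g (x T) ≤ M := (abs_le.1 (hgM _)).2
    have hnn : (0:ℝ) ≤ M * ε ^ p := mul_nonneg hM.le (Real.rpow_nonneg hε.le _)
    have h2 : M * ε ^ p * (T - t₀) ≤ M * ε ^ p * T := by nlinarith
    calc costOf T p a f g x₀ t₀ v
        = (∫ s in t₀..T, a (x s) s * ‖f (x s) s + v s‖ ^ p) + g (x T) := rfl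
      _ ≤ M * ε ^ p * (T - t₀) + M := add_le_add Ibound hg1
      _ ≤ M * ε ^ p * T + M := by linarith
  have hinf := csInf_le (bddBelow_costSet T p M δ hδ a f g hgM hδa x₀ t₀ ⟨ht₀0, ht₀T.le⟩)
    (⟨v, hadm, rfl⟩ : costOf T p a f g x₀ t₀ v ∈
      {c : ℝ | ∃ w, AdmissibleDeriv T p t₀ w ∧ costOf T p a f g x₀ t₀ w = c})
  exact hinf.trans hcost
set_option maxHeartbeats 1000000 in
private lemma optimal_bound {N : ℕ}
    (T p M δ : ℝ) (hT : 0 < T) (hp : 1 < p) (hM : 0 < M) (hδ : 0 < δ)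
    (a : EuclideanSpace ℝ (Fin N) → ℝ → ℝ)
    (f : EuclideanSpace ℝ (Fin N) → ℝ → EuclideanSpace ℝ (Fin N))
    (g : EuclideanSpace ℝ (Fin N) → ℝ)
    (hyp : StandardHyps T M δ a f g)
    (x₀ : EuclideanSpace ℝ (Fin N)) (t₀ : ℝ) (ht₀ : t₀ ∈ Ico 0 T)
    (v : ℝ → EuclideanSpace ℝ (Fin N)) (hopt : IsOptimalCurve T p a f g x₀ t₀ v)
    (ε : ℝ) (hε : 0 < ε) :
    (∫ s in t₀..T, ‖v s‖ ^ p) ≤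
      2 ^ (p-1) * ((M * ε ^ p * T + 2 * M) / δ) + 2 ^ (p-1) * (M ^ p * T) := by
  have hvalle : valueFn T p a f g x₀ t₀ ≤ M * ε ^ p * T + M :=
    valueFn_le T p M δ hT hp hM hδ a f g hyp x₀ t₀ ht₀ ε hε
  obtain ⟨ha, hf, hg, haM, hfM, hgM, hδa⟩ := hyp
  obtain ⟨hadm, hval⟩ := hopt
  have ht₀0 : 0 ≤ t₀ := ht₀.1
  have ht₀T : t₀ ≤ T := ht₀.2.le
  have hp0 : 0 < p := lt_trans one_pos hp
  set x := curveOf x₀ t₀ v with hx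
  have hadm' : MemLp v (ENNReal.ofReal p) (volume.restrict (Icc t₀ T)) := hadm
  have hple : (1 : ENNReal) ≤ ENNReal.ofReal p := by
    rw [← ENNReal.ofReal_one]
    exact ENNReal.ofReal_le_ofReal hp.le
  have hvL1 : IntegrableOn v (Icc t₀ T) :=
    memLp_one_iff_integrable.1 (hadm'.mono_exponent hple)
  have hvint : ∀ c ∈ Icc t₀ T, IntervalIntegrable v volume t₀ c := by
    intro c hc
    rw [intervalIntegrable_iff]
    exact hvL1.mono_set ((Set.uIoc_subset_uIcc).trans
      (uIcc_subset_Icc ⟨le_refl t₀, ht₀T⟩ hc))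
  have hxcont : ContinuousOn x (Icc t₀ T) := by
    have h1 : uIcc t₀ T = Icc t₀ T := uIcc_of_le ht₀T
    have h2 : IntegrableOn v (uIcc t₀ T) := by rwa [h1]
    have h3 := intervalIntegral.continuousOn_primitive_interval (a := t₀) (b := T)
      (μ := volume) (f := v) h2
    rw [h1] at h3
    have : ContinuousOn (fun s => x₀ + ∫ r in t₀..s, v r) (Icc t₀ T) :=
      continuousOn_const.add h3
    exact this
  have hmaps : MapsTo (fun s => ((x s, s) : EuclideanSpace ℝ (Fin N) × ℝ))
      (Icc t₀ T) (univ ×ˢ Icc 0 T) :=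
    fun s hs => ⟨mem_univ _, ⟨ht₀0.trans hs.1, hs.2⟩⟩
  have hxp : ContinuousOn (fun s => ((x s, s) : EuclideanSpace ℝ (Fin N) × ℝ)) (Icc t₀ T) :=
    hxcont.prodMk (continuousOn_id)
  have hFc : ContinuousOn (fun s => f (x s) s) (Icc t₀ T) := hf.comp hxp hmaps
  have hA : ContinuousOn (fun s => a (x s) s) (Icc t₀ T) := ha.comp hxp hmaps
  have hFm : MemLp (fun s => f (x s) s) (ENNReal.ofReal p) (volume.restrict (Icc t₀ T)) :=
    MemLp.of_bound (hFc.aestronglyMeasurable measurableSet_Icc) M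
      (by
        rw [ae_restrict_iff' measurableSet_Icc]
        exact Filter.Eventually.of_forall fun s hs => hfM _ _ ⟨ht₀0.trans hs.1, hs.2⟩)
  have hWm : MemLp (fun s => f (x s) s + v s) (ENNReal.ofReal p) (volume.restrict (Icc t₀ T)) :=
    hFm.add hadm'
  have hne0 : ENNReal.ofReal p ≠ 0 := by
    simp [ENNReal.ofReal_eq_zero, not_le, hp0]
  have hnetop : ENNReal.ofReal p ≠ ⊤ := ENNReal.ofReal_ne_top
  have htoReal : (ENNReal.ofReal p).toReal = p := ENNReal.toReal_ofReal hp0.le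
  have hGint : IntegrableOn (fun s => ‖f (x s) s + v s‖ ^ p) (Icc t₀ T) := by
    have := hWm.integrable_norm_rpow hne0 hnetop
    rwa [htoReal] at this
  have hVint : IntegrableOn (fun s => ‖v s‖ ^ p) (Icc t₀ T) := by
    have := hadm'.integrable_norm_rpow hne0 hnetop
    rwa [htoReal] at this
  have hFint : IntegrableOn (fun s => ‖f (x s) s‖ ^ p) (Icc t₀ T) := by
    have := hFm.integrable_norm_rpow hne0 hnetop
    rwa [htoReal] at this
  have hAGint : IntegrableOn (fun s => a (x s) s * ‖f (x s) s + v s‖ ^ p) (Icc t₀ T) := by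
    refine hGint.bdd_mul (c := M) (hA.aestronglyMeasurable measurableSet_Icc) ?_
    rw [ae_restrict_iff' measurableSet_Icc]
    exact Filter.Eventually.of_forall fun s hs => by
      rw [Real.norm_eq_abs]
      exact haM _ _ ⟨ht₀0.trans hs.1, hs.2⟩
  have toII : ∀ {F : ℝ → ℝ}, IntegrableOn F (Icc t₀ T) → IntervalIntegrable F volume t₀ T := by
    intro F hF
    rw [intervalIntegrable_iff_integrableOn_Ioc_of_le ht₀T]
    exact hF.mono_set Ioc_subset_Icc_self
  have hIAG : (∫ s in t₀..T, a (x s) s * ‖f (x s) s + v s‖ ^ p) ≤ M * ε ^ p * T + 2 * M := by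
    have hgx : -M ≤ g (x T) := (abs_le.1 (hgM _)).1
    have hc : (∫ s in t₀..T, a (x s) s * ‖f (x s) s + v s‖ ^ p) + g (x T)
        = costOf T p a f g x₀ t₀ v := rfl
    have he : (∫ s in t₀..T, a (x s) s * ‖f (x s) s + v s‖ ^ p) + g (x T)
        = valueFn T p a f g x₀ t₀ := hc.trans hval
    linarith
  have hδG : δ * (∫ s in t₀..T, ‖f (x s) s + v s‖ ^ p) ≤ M * ε ^ p * T + 2 * M := by
    have hmono := intervalIntegral.integral_mono_on ht₀T
      ((toII hGint).const_mul δ) (toII hAGint)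
      (fun s hs => by
        have hsT : s ∈ Icc 0 T := ⟨ht₀0.trans hs.1, hs.2⟩
        exact mul_le_mul_of_nonneg_right (hδa _ _ hsT)
          (Real.rpow_nonneg (norm_nonneg _) _))
    rw [intervalIntegral.integral_const_mul] at hmono
    linarith [hIAG]
  have hG : (∫ s in t₀..T, ‖f (x s) s + v s‖ ^ p) ≤ (M * ε ^ p * T + 2 * M) / δ := by
    rw [le_div_iff₀ hδ]
    calc (∫ s in t₀..T, ‖f (x s) s + v s‖ ^ p) * δ
        = δ * (∫ s in t₀..T, ‖f (x s) s + v s‖ ^ p) := by ring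
      _ ≤ _ := hδG
  have hFp : (∫ s in t₀..T, ‖f (x s) s‖ ^ p) ≤ M ^ p * T := by
    have hmono := intervalIntegral.integral_mono_on (g := fun _ => M ^ p) ht₀T (toII hFint)
      (intervalIntegrable_const (c := M ^ p))
      (fun s hs => Real.rpow_le_rpow (norm_nonneg _)
        (hfM _ _ ⟨ht₀0.trans hs.1, hs.2⟩) hp0.le)
    rw [intervalIntegral.integral_const, smul_eq_mul] at hmono
    have hMp : (0:ℝ) ≤ M ^ p := Real.rpow_nonneg hM.le _
    nlinarith
  have hptw : ∀ s ∈ Icc t₀ T,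
      ‖v s‖ ^ p ≤ 2 ^ (p-1) * (‖f (x s) s + v s‖ ^ p + ‖f (x s) s‖ ^ p) := by
    intro s _
    have h1 : ‖v s‖ ≤ ‖f (x s) s + v s‖ + ‖f (x s) s‖ := by
      calc ‖v s‖ = ‖(f (x s) s + v s) - f (x s) s‖ := by
            congr 1
            abel
        _ ≤ _ := norm_sub_le _ _
    calc ‖v s‖ ^ p ≤ (‖f (x s) s + v s‖ + ‖f (x s) s‖) ^ p :=
          Real.rpow_le_rpow (norm_nonneg _) h1 hp0.le
      _ ≤ _ := rpow_add_le_two_rpow p hp.le (norm_nonneg _) (norm_nonneg _)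
  have hmain : (∫ s in t₀..T, ‖v s‖ ^ p) ≤
      2 ^ (p-1) * ((∫ s in t₀..T, ‖f (x s) s + v s‖ ^ p) + ∫ s in t₀..T, ‖f (x s) s‖ ^ p) := by
    have hRint : IntervalIntegrable
        (fun s => 2 ^ (p-1) * (‖f (x s) s + v s‖ ^ p + ‖f (x s) s‖ ^ p)) volume t₀ T :=
      ((toII hGint).add (toII hFint)).const_mul _
    have hmono := intervalIntegral.integral_mono_on ht₀T (toII hVint) hRint hptw
    rwa [intervalIntegral.integral_const_mul,
      intervalIntegral.integral_add (toII hGint) (toII hFint)] at hmono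
  have h2pos : (0:ℝ) ≤ 2 ^ (p-1) := Real.rpow_nonneg (by norm_num) _
  calc (∫ s in t₀..T, ‖v s‖ ^ p) ≤ _ := hmain
    _ ≤ 2 ^ (p-1) * ((M * ε ^ p * T + 2*M)/δ + M ^ p * T) :=
        mul_le_mul_of_nonneg_left (add_le_add hG hFp) h2pos
    _ = 2 ^ (p-1) * ((M * ε ^ p * T + 2*M)/δ) + 2 ^ (p-1) * (M ^ p * T) := by ring
end BoundSolAux

/-- Lemma `BoundSol`: any optimal curve `x̄` for `(x₀,t₀)` satisfies
`∫_{t₀}^T |x̄'(s)|^p ds ≤ K` with `K = 2^{p-1}(M^{p+1}T + 2M)/δ + M^p T`. -/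
theorem bound_on_optimal_curves
    (T p M δ : ℝ) (hT : 0 < T) (hp : 1 < p) (hM : 0 < M) (hδ : 0 < δ)
    (N : ℕ) (hN : 1 ≤ N)
    (a : EuclideanSpace ℝ (Fin N) → ℝ → ℝ)
    (f : EuclideanSpace ℝ (Fin N) → ℝ → EuclideanSpace ℝ (Fin N))
    (g : EuclideanSpace ℝ (Fin N) → ℝ)
    (hyp : StandardHyps T M δ a f g) :
    0 ≤ (2:ℝ) ^ (p - 1) * (M ^ (p + 1) * T + 2 * M) / δ + M ^ p * T ∧
    ∀ (x₀ : EuclideanSpace ℝ (Fin N)) (t₀ : ℝ), t₀ ∈ Ico 0 T →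
      ∀ v : ℝ → EuclideanSpace ℝ (Fin N), IsOptimalCurve T p a f g x₀ t₀ v →
        ∫ s in t₀..T, ‖v s‖ ^ p ≤
          (2:ℝ) ^ (p - 1) * (M ^ (p + 1) * T + 2 * M) / δ + M ^ p * T := by
  have hp0 : 0 < p := lt_trans one_pos hp
  have h2 : (0:ℝ) < 2 ^ (p-1) := Real.rpow_pos_of_pos (by norm_num) _
  have hMp : (0:ℝ) < M ^ p := Real.rpow_pos_of_pos hM _
  have hMp1 : (0:ℝ) < M ^ (p+1) := Real.rpow_pos_of_pos hM _
  have hδM : δ ≤ M := by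
    have h1 := hyp.2.2.2.2.2.2 0 0 ⟨le_refl 0, hT.le⟩
    have h2 := hyp.2.2.2.1 0 0 ⟨le_refl 0, hT.le⟩
    have := le_abs_self (a 0 0)
    linarith
  constructor
  · have hnum : (0:ℝ) ≤ M ^ (p+1) * T + 2 * M := by nlinarith
    have := div_nonneg (mul_nonneg h2.le hnum) hδ.le
    nlinarith
  intro x₀ t₀ ht₀ v hopt
  set L := ∫ s in t₀..T, ‖v s‖ ^ p with hL
  set C := 2 ^ (p-1) * ((2*M)/δ) + 2 ^ (p-1) * (M ^ p * T) with hC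
  set c := 2 ^ (p-1) * (M * T) / δ with hc
  have hcpos : 0 < c := by
    rw [hc]
    have := mul_pos h2 (mul_pos hM hT)
    exact div_pos this hδ
  have hLle : ∀ η : ℝ, 0 < η → L ≤ C + η := by
    intro η hη
    set ε := (η / c) ^ (1/p) with hεdef
    have hεpos : 0 < ε := Real.rpow_pos_of_pos (div_pos hη hcpos) _
    have hεp : ε ^ p = η / c := by
      rw [hεdef, ← Real.rpow_mul (div_pos hη hcpos).le, one_div_mul_cancel (ne_of_gt hp0),
        Real.rpow_one]
    have hb := BoundSolAux.optimal_bound T p M δ hT hp hM hδ a f g hyp x₀ t₀ ht₀ v hopt ε hεpos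
    have he : 2 ^ (p-1) * ((M * ε^p * T + 2*M)/δ) + 2 ^ (p-1)*(M^p*T) = C + c * ε^p := by
      rw [hC, hc]
      ring
    rw [he, hεp, mul_div_cancel₀ η (ne_of_gt hcpos)] at hb
    exact hb
  clear_value L C c
  have hLC : L ≤ C := by
    by_contra hcon
    push_neg at hcon
    have := hLle ((L - C)/2) (by linarith)
    linarith
  have hfin : C ≤ 2 ^ (p - 1) * (M ^ (p + 1) * T + 2 * M) / δ + M ^ p * T := by
    have e1 : M ^ (p+1) = M ^ p * M := by
      rw [Real.rpow_add hM, Real.rpow_one]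
    have key : 2 ^ (p-1) * (M^p*T) ≤ 2 ^ (p-1) * (M^p*M*T)/δ := by
      rw [le_div_iff₀ hδ]
      have h3 : (0:ℝ) ≤ 2 ^ (p-1) * (M^p*T) := mul_nonneg h2.le (mul_nonneg hMp.le hT.le)
      have h4 := mul_le_mul_of_nonneg_left hδM h3
      nlinarith [h4]
    have expand : 2 ^ (p - 1) * (M ^ (p+1) * T + 2*M)/δ
        = 2 ^ (p-1) * (M^p*M*T)/δ + 2 ^ (p-1)*((2*M)/δ) := by
      rw [e1]
      ring
    rw [hC, expand]
    nlinarith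
  exact hLC.trans hfin
end
end

section
/- There are constants A ≥ 1 and B ≥ 0 depending only on M, δ, p, T such that, for any x₀ ∈ ℝ^N, any t₀ ∈ [0,T), and any curve x̄ that is optimal for the initial condition (x₀, t₀), one has for every h ∈ (0, T−t₀]: (1/h) ∫_{t₀}^{t₀+h} |x̄'(s)|^p ds ≤ A ( (1/h) ∫_{t₀}^{t₀+h} |x̄'(s)| ds )^p + B. -/
open MeasureTheory Set intervalIntegral
open scoped ENNReal

noncomputable section

lemma rpow_add_le_aux {x y p : ℝ} (hx : 0 ≤ x) (hy : 0 ≤ y) (hp : 0 ≤ p) :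
    (x + y) ^ p ≤ 2 ^ p * (x ^ p + y ^ p) := by
  have hmax : x + y ≤ 2 * max x y := by
    rcases le_total x y with h | h
    · rw [max_eq_right h]; linarith
    · rw [max_eq_left h]; linarith
  have h0max : (0:ℝ) ≤ max x y := le_max_of_le_left hx
  calc (x + y) ^ p ≤ (2 * max x y) ^ p :=
        Real.rpow_le_rpow (by linarith) hmax hp
    _ = 2 ^ p * (max x y) ^ p := Real.mul_rpow (by norm_num) h0max
    _ ≤ 2 ^ p * (x ^ p + y ^ p) := by
        have : (max x y) ^ p ≤ x ^ p + y ^ p := by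
          rcases le_total x y with h | h
          · rw [max_eq_right h]
            exact le_add_of_nonneg_left (Real.rpow_nonneg hx p)
          · rw [max_eq_left h]
            exact le_add_of_nonneg_right (Real.rpow_nonneg hy p)
        exact mul_le_mul_of_nonneg_left this (Real.rpow_nonneg (by norm_num) p)

lemma integrableOn_cost_integrand {N : ℕ} {T p M : ℝ}
    {a : EuclideanSpace ℝ (Fin N) → ℝ → ℝ}
    {f : EuclideanSpace ℝ (Fin N) → ℝ → EuclideanSpace ℝ (Fin N)}
    (haC : ContinuousOn (fun q : EuclideanSpace ℝ (Fin N) × ℝ => a q.1 q.2) (univ ×ˢ Icc 0 T))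
    (hfC : ContinuousOn (fun q : EuclideanSpace ℝ (Fin N) × ℝ => f q.1 q.2) (univ ×ˢ Icc 0 T))
    (haM : ∀ x t, t ∈ Icc 0 T → |a x t| ≤ M)
    (hfM : ∀ x t, t ∈ Icc 0 T → ‖f x t‖ ≤ M)
    {t₀ : ℝ} (h0 : 0 ≤ t₀) (hp : 0 ≤ p) (hM : 0 ≤ M)
    {y u : ℝ → EuclideanSpace ℝ (Fin N)}
    (hy : ContinuousOn y (Icc t₀ T))
    (hu : AEStronglyMeasurable u (volume.restrict (Icc t₀ T)))
    (hup : Integrable (fun s => ‖u s‖ ^ p) (volume.restrict (Icc t₀ T))) :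
    IntegrableOn (fun s => a (y s) s * ‖f (y s) s + u s‖ ^ p) (Icc t₀ T) := by
  have hsub : Icc t₀ T ⊆ Icc (0:ℝ) T := Icc_subset_Icc h0 le_rfl
  have hyt : ContinuousOn (fun s => (y s, s)) (Icc t₀ T) := hy.prodMk continuousOn_id
  have hmaps : MapsTo (fun s => (y s, s)) (Icc t₀ T) (univ ×ˢ Icc 0 T) :=
    fun s hs => ⟨mem_univ _, hsub hs⟩
  have haY : ContinuousOn (fun s => a (y s) s) (Icc t₀ T) := haC.comp hyt hmaps
  have hfY : ContinuousOn (fun s => f (y s) s) (Icc t₀ T) := hfC.comp hyt hmaps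
  have haYm : AEStronglyMeasurable (fun s => a (y s) s) (volume.restrict (Icc t₀ T)) :=
    haY.aestronglyMeasurable measurableSet_Icc
  have hsum : AEStronglyMeasurable (fun s => f (y s) s + u s) (volume.restrict (Icc t₀ T)) :=
    (hfY.aestronglyMeasurable measurableSet_Icc).add hu
  have hFm : AEStronglyMeasurable (fun s => a (y s) s * ‖f (y s) s + u s‖ ^ p)
      (volume.restrict (Icc t₀ T)) := by
    have h1 : AEMeasurable (fun s => ‖f (y s) s + u s‖ ^ p) (volume.restrict (Icc t₀ T)) := by
      have := hsum.norm.aemeasurable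
      fun_prop
    exact haYm.mul h1.aestronglyMeasurable
  have hbound : Integrable (fun s => M * (2 ^ p * (M ^ p + ‖u s‖ ^ p)))
      (volume.restrict (Icc t₀ T)) := (((integrable_const _).add hup).const_mul _).const_mul _
  refine hbound.mono' hFm ?_
  rw [ae_restrict_iff' measurableSet_Icc]
  filter_upwards with s hs
  have hsIcc : s ∈ Icc (0:ℝ) T := hsub hs
  have h1 : ‖f (y s) s + u s‖ ≤ M + ‖u s‖ :=
    (norm_add_le _ _).trans (by gcongr; exact hfM _ _ hsIcc)
  have h2 : ‖f (y s) s + u s‖ ^ p ≤ 2 ^ p * (M ^ p + ‖u s‖ ^ p) :=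
    (Real.rpow_le_rpow (norm_nonneg _) h1 hp).trans
      (rpow_add_le_aux hM (norm_nonneg _) hp)
  have h3 : (0:ℝ) ≤ ‖f (y s) s + u s‖ ^ p := Real.rpow_nonneg (norm_nonneg _) p
  calc ‖a (y s) s * ‖f (y s) s + u s‖ ^ p‖
      = |a (y s) s| * ‖f (y s) s + u s‖ ^ p := by
        rw [norm_mul, Real.norm_eq_abs, Real.norm_eq_abs, abs_of_nonneg h3]
    _ ≤ M * (2 ^ p * (M ^ p + ‖u s‖ ^ p)) :=
        mul_le_mul (haM _ _ hsIcc) h2 h3 hM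

lemma neg_M_le_costOf {N : ℕ} {T p M δ : ℝ}
    {a : EuclideanSpace ℝ (Fin N) → ℝ → ℝ}
    {f : EuclideanSpace ℝ (Fin N) → ℝ → EuclideanSpace ℝ (Fin N)}
    {g : EuclideanSpace ℝ (Fin N) → ℝ}
    (haδ : ∀ x t, t ∈ Icc 0 T → δ ≤ a x t) (hδ : 0 ≤ δ)
    (hgM : ∀ x, |g x| ≤ M)
    {x : EuclideanSpace ℝ (Fin N)} {t : ℝ} (h0 : 0 ≤ t) (hT : t ≤ T)
    (v : ℝ → EuclideanSpace ℝ (Fin N)) :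
    -M ≤ costOf T p a f g x t v := by
  unfold costOf
  have h1 : 0 ≤ ∫ s in t..T,
      a (curveOf x t v s) s * ‖f (curveOf x t v s) s + v s‖ ^ p := by
    apply intervalIntegral.integral_nonneg hT
    intro u hu
    exact mul_nonneg (le_trans hδ (haδ _ _ ⟨le_trans h0 hu.1, hu.2⟩))
      (Real.rpow_nonneg (norm_nonneg _) p)
  have h2 : -M ≤ g (curveOf x t v T) := neg_le_of_abs_le (hgM _)
  linarith

/-- Lemma `EstiOptiSol`: there are constants `A ≥ 1`, `B ≥ 0` depending only
on `M, δ, p, T` such that any optimal curve `x̄` for `(x₀,t₀)` satisfies, for all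
`h ∈ (0, T-t₀]`, `(1/h)∫_{t₀}^{t₀+h} |x̄'|^p ≤ A ((1/h)∫_{t₀}^{t₀+h} |x̄'|)^p + B`. -/
theorem reverse_holder_bound_on_optimal_curves
    (T p M δ : ℝ) (hT : 0 < T) (hp : 1 < p) (hM : 0 < M) (hδ : 0 < δ) :
    ∃ A ≥ (1:ℝ), ∃ B ≥ (0:ℝ),
      ∀ (N : ℕ), 1 ≤ N →
        ∀ (a : EuclideanSpace ℝ (Fin N) → ℝ → ℝ)
          (f : EuclideanSpace ℝ (Fin N) → ℝ → EuclideanSpace ℝ (Fin N))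
          (g : EuclideanSpace ℝ (Fin N) → ℝ), StandardHyps T M δ a f g →
          ∀ (x₀ : EuclideanSpace ℝ (Fin N)) (t₀ : ℝ), t₀ ∈ Ico 0 T →
            ∀ v : ℝ → EuclideanSpace ℝ (Fin N), IsOptimalCurve T p a f g x₀ t₀ v →
              ∀ h ∈ Ioc 0 (T - t₀),
                (1 / h) * ∫ s in t₀..t₀ + h, ‖v s‖ ^ p ≤
                  A * ((1 / h) * ∫ s in t₀..t₀ + h, ‖v s‖) ^ p + B := by
  have hp0 : (0:ℝ) ≤ p := by linarith
  have h2p : (0:ℝ) < 2 ^ p := Real.rpow_pos_of_pos (by norm_num) p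
  have hMp : (0:ℝ) < M ^ p := Real.rpow_pos_of_pos hM p
  refine ⟨1 + 2 ^ p * 2 ^ p * M / δ, le_add_of_nonneg_right (by positivity),
    2 ^ p * 2 ^ p * M * M ^ p / δ + 2 ^ p * M ^ p, by positivity, ?_⟩
  intro N hN a f g hyp x₀ t₀ ht₀ v hvopt h hh
  obtain ⟨haC, hfC, hgC, haM, hfM, hgM, haδ⟩ := hyp
  obtain ⟨hadm, hcost⟩ := hvopt
  have hh0 : 0 < h := hh.1
  have h01 : t₀ ≤ t₀ + h := by linarith
  have h1T : t₀ + h ≤ T := by have := hh.2; linarith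
  have h0t : (0:ℝ) ≤ t₀ := ht₀.1
  have htT : t₀ ≤ T := le_trans h01 h1T
  have hsub0 : Icc t₀ T ⊆ Icc (0:ℝ) T := Icc_subset_Icc h0t le_rfl
  set μ := volume.restrict (Icc t₀ T) with hμ
  haveI : IsFiniteMeasure μ := by
    constructor
    rw [hμ, Measure.restrict_apply_univ]
    exact measure_Icc_lt_top
  have hp1' : (1:ℝ≥0∞) ≤ ENNReal.ofReal p := by
    rw [ENNReal.one_le_ofReal]; exact hp.le
  have hpne0 : ENNReal.ofReal p ≠ 0 := by
    simp only [ne_eq, ENNReal.ofReal_eq_zero, not_le]; linarith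
  have hvSM : AEStronglyMeasurable v μ := hadm.aestronglyMeasurable
  have hvInt : Integrable v μ := hadm.integrable hp1'
  have hvp : Integrable (fun s => ‖v s‖ ^ p) μ := by
    have := hadm.integrable_norm_rpow hpne0 ENNReal.ofReal_ne_top
    simpa [ENNReal.toReal_ofReal hp0] using this
  -- the optimal curve
  set xbar := curveOf x₀ t₀ v with hxbar
  have hvII : ∀ a' b', t₀ ≤ a' → a' ≤ b' → b' ≤ T → IntervalIntegrable v volume a' b' := by
    intro a' b' h1 h2 h3
    apply MeasureTheory.IntegrableOn.intervalIntegrable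
    rw [uIcc_of_le h2]
    exact MeasureTheory.IntegrableOn.mono_set hvInt (Icc_subset_Icc h1 h3)
  have hxbarC : ContinuousOn xbar (Icc t₀ T) := by
    have hpr : ContinuousOn (fun b => ∫ r in t₀..b, v r) (Icc t₀ T) := by
      have := intervalIntegral.continuousOn_primitive_interval'
        (hvII t₀ T le_rfl htT le_rfl) (by rw [uIcc_of_le htT]; exact left_mem_Icc.mpr htT)
      rwa [uIcc_of_le htT] at this
    exact continuousOn_const.add hpr
  -- the comparison curve
  set c := h⁻¹ • ∫ s in t₀..t₀ + h, v s with hc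
  set w : ℝ → EuclideanSpace ℝ (Fin N) := fun s => if s ≤ t₀ + h then c else v s with hw
  have hw_eqc : ∀ s ∈ Icc t₀ (t₀ + h), w s = c := fun s hs => if_pos hs.2
  have hw_eqv : ∀ s, t₀ + h < s → w s = v s := fun s hs => if_neg (not_le.mpr hs)
  have hwdecomp : w = (Iic (t₀ + h)).indicator (fun _ => c) + ((Iic (t₀ + h))ᶜ).indicator v := by
    funext s
    by_cases hs : s ≤ t₀ + h
    · simp [hw, Set.indicator_apply, mem_Iic, hs]
    · simp [hw, Set.indicator_apply, mem_Iic, hs, not_le.mp hs]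
  have hwadm : MemLp w (ENNReal.ofReal p) μ := by
    rw [hwdecomp]
    exact ((memLp_const c).indicator measurableSet_Iic).add
      (hadm.indicator measurableSet_Iic.compl)
  have hwSM : AEStronglyMeasurable w μ := hwadm.aestronglyMeasurable
  have hwInt : Integrable w μ := hwadm.integrable hp1'
  have hwp : Integrable (fun s => ‖w s‖ ^ p) μ := by
    have := hwadm.integrable_norm_rpow hpne0 ENNReal.ofReal_ne_top
    simpa [ENNReal.toReal_ofReal hp0] using this
  have hwII : ∀ a' b', t₀ ≤ a' → a' ≤ b' → b' ≤ T → IntervalIntegrable w volume a' b' := by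
    intro a' b' h1 h2 h3
    apply MeasureTheory.IntegrableOn.intervalIntegrable
    rw [uIcc_of_le h2]
    exact MeasureTheory.IntegrableOn.mono_set hwInt (Icc_subset_Icc h1 h3)
  set ybar := curveOf x₀ t₀ w with hybar
  have hybarC : ContinuousOn ybar (Icc t₀ T) := by
    have hpr : ContinuousOn (fun b => ∫ r in t₀..b, w r) (Icc t₀ T) := by
      have := intervalIntegral.continuousOn_primitive_interval'
        (hwII t₀ T le_rfl htT le_rfl) (by rw [uIcc_of_le htT]; exact left_mem_Icc.mpr htT)
      rwa [uIcc_of_le htT] at this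
    exact continuousOn_const.add hpr
  -- the two curves agree after t₀ + h
  have hweq : ∀ s, t₀ + h ≤ s → s ≤ T → ybar s = xbar s := by
    intro s h1 h2
    rw [hybar, hxbar]
    unfold curveOf
    congr 1
    have e1 : ∫ r in t₀..t₀ + h, w r = ∫ r in t₀..t₀ + h, v r := by
      have e : ∫ r in t₀..t₀ + h, w r = ∫ r in t₀..t₀ + h, (fun _ => c) r :=
        intervalIntegral.integral_congr (fun r hr => by
          rw [uIcc_of_le h01] at hr; exact hw_eqc r hr)
      rw [e, intervalIntegral.integral_const, show t₀ + h - t₀ = h by ring, hc,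
        smul_smul, mul_inv_cancel₀ hh0.ne', one_smul]
    have e2 : ∫ r in t₀ + h..s, w r = ∫ r in t₀ + h..s, v r := by
      rw [intervalIntegral.integral_of_le h1, intervalIntegral.integral_of_le h1]
      exact setIntegral_congr_fun measurableSet_Ioc (fun r hr => hw_eqv r hr.1)
    rw [← intervalIntegral.integral_add_adjacent_intervals
        (hwII t₀ (t₀ + h) le_rfl h01 h1T) (hwII (t₀ + h) s h01 h1 h2),
      ← intervalIntegral.integral_add_adjacent_intervals
        (hvII t₀ (t₀ + h) le_rfl h01 h1T) (hvII (t₀ + h) s h01 h1 h2),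
      e1, e2]
  -- the integrands
  set Fv := fun s => a (xbar s) s * ‖f (xbar s) s + v s‖ ^ p with hFv
  set Fw := fun s => a (ybar s) s * ‖f (ybar s) s + w s‖ ^ p with hFw
  have hFvInt : IntegrableOn Fv (Icc t₀ T) :=
    integrableOn_cost_integrand haC hfC haM hfM h0t hp0 hM.le hxbarC hvSM hvp
  have hFwInt : IntegrableOn Fw (Icc t₀ T) :=
    integrableOn_cost_integrand haC hfC haM hfM h0t hp0 hM.le hybarC hwSM hwp
  have hFvII : ∀ a' b', t₀ ≤ a' → a' ≤ b' → b' ≤ T → IntervalIntegrable Fv volume a' b' := by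
    intro a' b' h1 h2 h3
    apply MeasureTheory.IntegrableOn.intervalIntegrable
    rw [uIcc_of_le h2]
    exact hFvInt.mono_set (Icc_subset_Icc h1 h3)
  have hFwII : ∀ a' b', t₀ ≤ a' → a' ≤ b' → b' ≤ T → IntervalIntegrable Fw volume a' b' := by
    intro a' b' h1 h2 h3
    apply MeasureTheory.IntegrableOn.intervalIntegrable
    rw [uIcc_of_le h2]
    exact hFwInt.mono_set (Icc_subset_Icc h1 h3)
  -- optimality comparison
  have hvle : costOf T p a f g x₀ t₀ v ≤ costOf T p a f g x₀ t₀ w := by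
    rw [hcost]
    apply csInf_le
    · refine ⟨-M, ?_⟩
      rintro c' ⟨v', hv', rfl⟩
      exact neg_M_le_costOf haδ hδ.le hgM h0t htT v'
    · exact ⟨w, hwadm, rfl⟩
  have hkey : (∫ s in t₀..t₀ + h, Fv s) ≤ ∫ s in t₀..t₀ + h, Fw s := by
    have hcv : costOf T p a f g x₀ t₀ v
        = (∫ s in t₀..t₀ + h, Fv s) + (∫ s in t₀ + h..T, Fv s) + g (xbar T) := by
      unfold costOf
      rw [← hxbar, ← hFv,
        ← intervalIntegral.integral_add_adjacent_intervals
          (hFvII t₀ (t₀ + h) le_rfl h01 h1T) (hFvII (t₀ + h) T h01 h1T le_rfl)]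
    have hcw : costOf T p a f g x₀ t₀ w
        = (∫ s in t₀..t₀ + h, Fw s) + (∫ s in t₀ + h..T, Fv s) + g (xbar T) := by
      unfold costOf
      rw [← hybar, ← hFw,
        ← intervalIntegral.integral_add_adjacent_intervals
          (hFwII t₀ (t₀ + h) le_rfl h01 h1T) (hFwII (t₀ + h) T h01 h1T le_rfl)]
      have e3 : ∫ s in t₀ + h..T, Fw s = ∫ s in t₀ + h..T, Fv s := by
        rw [intervalIntegral.integral_of_le h1T, intervalIntegral.integral_of_le h1T]
        apply setIntegral_congr_fun measurableSet_Ioc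
        intro s hs
        rw [hFw, hFv]
        simp only
        rw [hweq s hs.1.le hs.2, hw_eqv s hs.1]
      rw [e3, hweq T h1T le_rfl]
    rw [hcv, hcw] at hvle
    linarith
  -- upper bound on the comparison cost
  have hCmem : ∀ s ∈ Icc t₀ (t₀ + h), s ∈ Icc (0:ℝ) T :=
    fun s hs => hsub0 ⟨hs.1, le_trans hs.2 h1T⟩
  have hub : (∫ s in t₀..t₀ + h, Fw s) ≤ h * (M * (2 ^ p * (M ^ p + ‖c‖ ^ p))) := by
    have hmono : ∀ s ∈ Icc t₀ (t₀ + h), Fw s ≤ M * (2 ^ p * (M ^ p + ‖c‖ ^ p)) := by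
      intro s hs
      have hsIcc0 : s ∈ Icc (0:ℝ) T := hCmem s hs
      rw [hFw]
      simp only
      rw [hw_eqc s hs]
      have h1 : ‖f (ybar s) s + c‖ ≤ M + ‖c‖ :=
        (norm_add_le _ _).trans (by gcongr; exact hfM _ _ hsIcc0)
      have h2 : ‖f (ybar s) s + c‖ ^ p ≤ 2 ^ p * (M ^ p + ‖c‖ ^ p) :=
        (Real.rpow_le_rpow (norm_nonneg _) h1 hp0).trans
          (rpow_add_le_aux hM.le (norm_nonneg _) hp0)
      exact mul_le_mul (le_of_abs_le (haM _ _ hsIcc0)) h2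
        (Real.rpow_nonneg (norm_nonneg _) p) hM.le
    calc (∫ s in t₀..t₀ + h, Fw s)
        ≤ ∫ _ in t₀..t₀ + h, M * (2 ^ p * (M ^ p + ‖c‖ ^ p)) :=
          intervalIntegral.integral_mono_on h01
            (hFwII t₀ (t₀ + h) le_rfl h01 h1T) intervalIntegrable_const hmono
      _ = h * (M * (2 ^ p * (M ^ p + ‖c‖ ^ p))) := by
          rw [intervalIntegral.integral_const, smul_eq_mul, show t₀ + h - t₀ = h by ring]
  -- lower bound: δ ∫ ‖f+v‖ᵖ ≤ ∫ Fv
  have hGInt : IntegrableOn (fun s => ‖f (xbar s) s + v s‖ ^ p) (Icc t₀ T) := by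
    have := integrableOn_cost_integrand (a := fun _ _ => (1:ℝ)) (M := max 1 M)
      continuousOn_const hfC (fun x t _ => by simp)
      (fun x t ht => le_trans (hfM x t ht) (le_max_right _ _))
      h0t hp0 (by positivity) hxbarC hvSM hvp
    simpa using this
  have hGII : IntervalIntegrable (fun s => ‖f (xbar s) s + v s‖ ^ p) volume t₀ (t₀ + h) := by
    apply MeasureTheory.IntegrableOn.intervalIntegrable
    rw [uIcc_of_le h01]
    exact hGInt.mono_set (Icc_subset_Icc le_rfl h1T)
  have hlb1 : δ * (∫ s in t₀..t₀ + h, ‖f (xbar s) s + v s‖ ^ p)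
      ≤ ∫ s in t₀..t₀ + h, Fv s := by
    rw [← intervalIntegral.integral_const_mul]
    apply intervalIntegral.integral_mono_on h01 (hGII.const_mul δ)
      (hFvII t₀ (t₀ + h) le_rfl h01 h1T)
    intro s hs
    exact mul_le_mul_of_nonneg_right (haδ _ _ (hCmem s hs))
      (Real.rpow_nonneg (norm_nonneg _) p)
  -- pointwise bound on ‖v‖ᵖ
  have hvpII : IntervalIntegrable (fun s => ‖v s‖ ^ p) volume t₀ (t₀ + h) := by
    apply MeasureTheory.IntegrableOn.intervalIntegrable
    rw [uIcc_of_le h01]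
    exact MeasureTheory.IntegrableOn.mono_set hvp (Icc_subset_Icc le_rfl h1T)
  have hlb2 : (∫ s in t₀..t₀ + h, ‖v s‖ ^ p)
      ≤ 2 ^ p * (h * M ^ p) + 2 ^ p * ∫ s in t₀..t₀ + h, ‖f (xbar s) s + v s‖ ^ p := by
    have hmono : ∀ s ∈ Icc t₀ (t₀ + h),
        ‖v s‖ ^ p ≤ 2 ^ p * (M ^ p + ‖f (xbar s) s + v s‖ ^ p) := by
      intro s hs
      have hsIcc0 : s ∈ Icc (0:ℝ) T := hCmem s hs
      have h1 : ‖v s‖ ≤ M + ‖f (xbar s) s + v s‖ := by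
        have e : ‖v s‖ ≤ ‖f (xbar s) s‖ + ‖f (xbar s) s + v s‖ := by
          have := norm_add_le (-(f (xbar s) s)) (f (xbar s) s + v s)
          simpa using this
        linarith [hfM (xbar s) s hsIcc0]
      exact (Real.rpow_le_rpow (norm_nonneg _) h1 hp0).trans
        (rpow_add_le_aux hM.le (norm_nonneg _) hp0)
    calc (∫ s in t₀..t₀ + h, ‖v s‖ ^ p)
        ≤ ∫ s in t₀..t₀ + h, 2 ^ p * (M ^ p + ‖f (xbar s) s + v s‖ ^ p) :=
          intervalIntegral.integral_mono_on h01 hvpII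
            (((_root_.intervalIntegrable_const (c := M ^ p)).add hGII).const_mul _) hmono
      _ = 2 ^ p * (h * M ^ p) + 2 ^ p * ∫ s in t₀..t₀ + h, ‖f (xbar s) s + v s‖ ^ p := by
          rw [intervalIntegral.integral_const_mul, intervalIntegral.integral_add
            intervalIntegrable_const hGII, intervalIntegral.integral_const, smul_eq_mul,
            show t₀ + h - t₀ = h by ring]
          ring
  -- assemble
  set X := ∫ s in t₀..t₀ + h, ‖v s‖ ^ p with hX
  set R := (1 / h) * ∫ s in t₀..t₀ + h, ‖v s‖ with hR
  have hCle : ‖c‖ ^ p ≤ R ^ p := by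
    have hnorm : ‖c‖ ≤ R := by
      rw [hc, norm_smul, Real.norm_eq_abs, abs_of_pos (inv_pos.mpr hh0), hR, one_div]
      exact mul_le_mul_of_nonneg_left
        (intervalIntegral.norm_integral_le_integral_norm h01) (inv_pos.mpr hh0).le
    exact Real.rpow_le_rpow (norm_nonneg _) hnorm hp0
  have hR0 : 0 ≤ R := by
    rw [hR]
    apply mul_nonneg (by positivity)
    exact intervalIntegral.integral_nonneg h01 (fun s _ => norm_nonneg _)
  have hRp0 : 0 ≤ R ^ p := Real.rpow_nonneg hR0 p
  have hC0 : 0 ≤ ‖c‖ ^ p := Real.rpow_nonneg (norm_nonneg _) p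
  have hY : (∫ s in t₀..t₀ + h, ‖f (xbar s) s + v s‖ ^ p)
      ≤ h * (M * (2 ^ p * (M ^ p + ‖c‖ ^ p))) / δ := by
    rw [le_div_iff₀ hδ]
    calc (∫ s in t₀..t₀ + h, ‖f (xbar s) s + v s‖ ^ p) * δ
        = δ * ∫ s in t₀..t₀ + h, ‖f (xbar s) s + v s‖ ^ p := by ring
      _ ≤ ∫ s in t₀..t₀ + h, Fv s := hlb1
      _ ≤ ∫ s in t₀..t₀ + h, Fw s := hkey
      _ ≤ h * (M * (2 ^ p * (M ^ p + ‖c‖ ^ p))) := hub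
  have hXle : X ≤ 2 ^ p * (h * M ^ p) + 2 ^ p * (h * (M * (2 ^ p * (M ^ p + ‖c‖ ^ p))) / δ) :=
    hlb2.trans (by gcongr)
  have hfinal : (1 / h) * X
      ≤ 2 ^ p * M ^ p + 2 ^ p * 2 ^ p * M * (M ^ p + ‖c‖ ^ p) / δ := by
    have h1 : (1 / h) * X ≤ (1 / h) *
        (2 ^ p * (h * M ^ p) + 2 ^ p * (h * (M * (2 ^ p * (M ^ p + ‖c‖ ^ p))) / δ)) :=
      mul_le_mul_of_nonneg_left hXle (by positivity)
    have h2 : (1 / h) *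
        (2 ^ p * (h * M ^ p) + 2 ^ p * (h * (M * (2 ^ p * (M ^ p + ‖c‖ ^ p))) / δ))
        = 2 ^ p * M ^ p + 2 ^ p * 2 ^ p * M * (M ^ p + ‖c‖ ^ p) / δ := by
      field_simp
    linarith
  have hstep : 2 ^ p * 2 ^ p * M * (M ^ p + ‖c‖ ^ p) / δ
      ≤ 2 ^ p * 2 ^ p * M * M ^ p / δ + 2 ^ p * 2 ^ p * M / δ * R ^ p := by
    have e : 2 ^ p * 2 ^ p * M * (M ^ p + ‖c‖ ^ p) / δ
        = 2 ^ p * 2 ^ p * M * M ^ p / δ + 2 ^ p * 2 ^ p * M / δ * ‖c‖ ^ p := by ring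
    rw [e]
    gcongr
  have hfin2 : 2 ^ p * 2 ^ p * M / δ * R ^ p ≤ (1 + 2 ^ p * 2 ^ p * M / δ) * R ^ p := by
    apply mul_le_mul_of_nonneg_right _ hRp0
    linarith
  calc (1 / h) * X
      ≤ 2 ^ p * M ^ p + 2 ^ p * 2 ^ p * M * (M ^ p + ‖c‖ ^ p) / δ := hfinal
    _ ≤ 2 ^ p * M ^ p + (2 ^ p * 2 ^ p * M * M ^ p / δ + 2 ^ p * 2 ^ p * M / δ * R ^ p) := by
        linarith
    _ ≤ (1 + 2 ^ p * 2 ^ p * M / δ) * R ^ p + (2 ^ p * 2 ^ p * M * M ^ p / δ + 2 ^ p * M ^ p) := by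
        linarith
end
end

section
/- Let A > 1 and p > 1. Then there are constants θ = θ(A,p) > p and C = C(A,p) > 0 such that, for every α ∈ L^p(0,1) satisfying the reverse Hölder condition (1/h) ∫_0^h |α(s)|^p ds ≤ A ( (1/h) ∫_0^h |α(s)| ds )^p for all h ∈ (0,1], one has ∫_0^h |α(s)| ds ≤ C ‖α‖_{L^p(0,1)} h^{1−1/θ} for all h ∈ [0,1]. -/
open MeasureTheory Set intervalIntegral

lemma rh_holder_piece {p : ℝ} (hp : 1 < p) {f : ℝ → ℝ} (hnn : ∀ s, 0 ≤ f s)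
    (hmem : MemLp f (ENNReal.ofReal p) (volume.restrict (Ioo (0:ℝ) 1)))
    {a b : ℝ} (ha : 0 ≤ a) (hab : a ≤ b) (hb : b ≤ 1) :
    ∫ s in a..b, f s ≤ (b - a) ^ (1 - 1/p) * (∫ s in a..b, f s ^ p) ^ (1/p) := by
  have hp0 : 0 < p := lt_trans one_pos hp
  have hsub : Ioo a b ⊆ Ioo 0 1 := fun x hx => ⟨lt_of_le_of_lt ha hx.1, lt_of_lt_of_le hx.2 hb⟩
  set μ := volume.restrict (Ioo a b) with hμ
  have hmem' : MemLp f (ENNReal.ofReal p) μ :=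
    hmem.mono_measure (Measure.restrict_mono hsub le_rfl)
  have hpq : p.HolderConjugate (Real.conjExponent p) := Real.HolderConjugate.conjExponent hp
  have hg : MemLp (fun _ : ℝ => (1:ℝ)) (ENNReal.ofReal (Real.conjExponent p)) μ := memLp_const 1
  have key := integral_mul_le_Lp_mul_Lq_of_nonneg hpq
    (Filter.Eventually.of_forall hnn) (Filter.Eventually.of_forall fun _ => zero_le_one)
    hmem' hg
  simp only [mul_one] at key
  have h1q : 1 / Real.conjExponent p = 1 - 1/p := by
    rw [Real.conjExponent]
    rw [one_div_div]
    field_simp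
  have hconst : ∫ _ : ℝ, (1:ℝ) ^ Real.conjExponent p ∂μ = b - a := by
    rw [Real.one_rpow]
    simp [hμ, Real.volume_Ioo, ENNReal.toReal_ofReal (sub_nonneg.2 hab), hab]
  rw [hconst, h1q] at key
  have e1 : ∫ s in a..b, f s = ∫ x, f x ∂μ := by
    rw [intervalIntegral.integral_of_le hab, hμ]
    exact (setIntegral_congr_set Ioo_ae_eq_Ioc).symm
  have e2 : ∫ s in a..b, f s ^ p = ∫ x, f x ^ p ∂μ := by
    rw [intervalIntegral.integral_of_le hab, hμ]
    exact (setIntegral_congr_set Ioo_ae_eq_Ioc).symm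
  rw [e1, e2]
  calc ∫ x, f x ∂μ ≤ (∫ x, f x ^ p ∂μ) ^ (1/p) * (b - a) ^ (1 - 1/p) := key
    _ = (b - a) ^ (1 - 1/p) * (∫ x, f x ^ p ∂μ) ^ (1/p) := mul_comm _ _

set_option maxHeartbeats 1000000 in
/-- Lemma `RevHol`, reverse Hölder inequality: for `A > 1` and `p > 1` there
exist `θ = θ(A,p) > p` and `C = C(A,p) > 0` such that every `α ∈ L^p(0,1)` with
`(1/h)∫_0^h |α|^p ≤ A((1/h)∫_0^h |α|)^p` for all `h ∈ (0,1]` satisfies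
`∫_0^h |α| ≤ C ‖α‖_p h^{1-1/θ}` for all `h ∈ [0,1]`. -/
theorem reverse_holder_inequality (A p : ℝ) (hA : 1 < A) (hp : 1 < p) :
    ∃ θ > p, ∃ C > (0:ℝ), ∀ α : ℝ → ℝ,
      MemLp α (ENNReal.ofReal p) (volume.restrict (Ioo (0:ℝ) 1)) →
      (∀ h ∈ Ioc (0:ℝ) 1,
        (1 / h) * ∫ s in (0:ℝ)..h, |α s| ^ p ≤
          A * ((1 / h) * ∫ s in (0:ℝ)..h, |α s|) ^ p) →
      ∀ h ∈ Icc (0:ℝ) 1,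
        ∫ s in (0:ℝ)..h, |α s| ≤
          C * (∫ s in (0:ℝ)..1, |α s| ^ p) ^ (1 / p) * h ^ (1 - 1 / θ) := by
  have hp0 : 0 < p := lt_trans one_pos hp
  have hp1 : p - 1 ≠ 0 := sub_ne_zero.2 hp.ne'
  have hA0 : 0 < A := lt_trans one_pos hA
  -- constants
  set B := A ^ (-(1/p)) with hBdef
  have hB0 : 0 < B := Real.rpow_pos_of_pos hA0 _
  have hB1 : B < 1 := Real.rpow_lt_one_of_one_lt_of_neg hA (neg_lt_zero.mpr (by positivity))
  set b3 := B/3 with hb3def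
  have hb30 : 0 < b3 := by rw [hb3def]; positivity
  have hb31 : b3 < 1 := by rw [hb3def]; linarith
  set δ := b3 ^ (p/(p-1)) with hδdef
  have hδ0 : 0 < δ := Real.rpow_pos_of_pos hb30 _
  have hδ1 : δ < 1 := Real.rpow_lt_one hb30.le hb31 (div_pos hp0 (by linarith))
  have hb3p0 : 0 < b3 ^ p := Real.rpow_pos_of_pos hb30 _
  have hb3p1 : b3 ^ p < 1 := Real.rpow_lt_one hb30.le hb31 hp0
  set t₀ := 1 - b3 ^ p with ht₀def
  have ht₀0 : 0 < t₀ := by rw [ht₀def]; linarith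
  have ht₀1 : t₀ < 1 := by rw [ht₀def]; linarith
  set γ := Real.log t₀ / Real.log δ with hγdef
  have hlogt : Real.log t₀ < 0 := Real.log_neg ht₀0 ht₀1
  have hlogδ : Real.log δ < 0 := Real.log_neg hδ0 hδ1
  have hγ0 : 0 < γ := div_pos_iff.mpr (Or.inr ⟨hlogt, hlogδ⟩)
  have hδγ : δ ^ γ = t₀ := by
    rw [hγdef, Real.rpow_def_of_pos hδ0, mul_comm, div_mul_cancel₀ _ hlogδ.ne, Real.exp_log ht₀0]
  set γ' := min γ (1/2) with hγ'def
  have hγ'0 : 0 < γ' := lt_min hγ0 (by norm_num)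
  have hγ'γ : γ' ≤ γ := min_le_left _ _
  have hγ'2 : γ' ≤ 1/2 := min_le_right _ _
  have h1γ' : 0 < 1 - γ' := by linarith
  clear_value B b3 δ t₀ γ γ'
  refine ⟨p / (1-γ'), ?_, δ ^ (-(γ/p)), Real.rpow_pos_of_pos hδ0 _, ?_⟩
  · rw [gt_iff_lt, lt_div_iff₀ h1γ']
    nlinarith [mul_pos hp0 hγ'0]
  intro α hα hyp
  -- basic facts
  have hnn : ∀ s, (0:ℝ) ≤ |α s| := fun s => abs_nonneg _
  have hnnp : ∀ s, (0:ℝ) ≤ |α s| ^ p := fun s => Real.rpow_nonneg (abs_nonneg _) _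
  have hmem : MemLp (fun s => |α s|) (ENNReal.ofReal p) (volume.restrict (Ioo (0:ℝ) 1)) := by
    simpa [Real.norm_eq_abs] using hα.norm
  haveI : IsFiniteMeasure (volume.restrict (Ioo (0:ℝ) 1)) := by
    constructor
    rw [Measure.restrict_apply_univ, Real.volume_Ioo]
    exact ENNReal.ofReal_lt_top
  have hIntp : IntegrableOn (fun s => |α s| ^ p) (Ioo (0:ℝ) 1) volume := by
    have h1 := hα.integrable_norm_rpow (by simp [hp0] : ENNReal.ofReal p ≠ 0)
      ENNReal.ofReal_ne_top
    have h2 : Integrable (fun x => |α x| ^ p) (volume.restrict (Ioo (0:ℝ) 1)) := by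
      simpa [Real.norm_eq_abs, ENNReal.toReal_ofReal hp0.le] using h1
    exact h2
  have hInt1 : IntegrableOn (fun s => |α s|) (Ioo (0:ℝ) 1) volume := by
    have h1 : Integrable α (volume.restrict (Ioo (0:ℝ) 1)) :=
      (hα.mono_exponent (ENNReal.one_le_ofReal.mpr hp.le)).integrable le_rfl
    exact h1.abs
  -- interval integrability
  have hIIf : ∀ a b : ℝ, 0 ≤ a → a ≤ b → b ≤ 1 →
      IntervalIntegrable (fun s => |α s|) volume a b := by
    intro a b ha hab hb
    rw [intervalIntegrable_iff, uIoc_of_le hab]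
    exact (integrableOn_Ioc_iff_integrableOn_Ioo).2
      (hInt1.mono_set fun x hx => ⟨lt_of_le_of_lt ha hx.1, lt_of_lt_of_le hx.2 hb⟩)
  have hIIp : ∀ a b : ℝ, 0 ≤ a → a ≤ b → b ≤ 1 →
      IntervalIntegrable (fun s => |α s| ^ p) volume a b := by
    intro a b ha hab hb
    rw [intervalIntegrable_iff, uIoc_of_le hab]
    exact (integrableOn_Ioc_iff_integrableOn_Ioo).2
      (hIntp.mono_set fun x hx => ⟨lt_of_le_of_lt ha hx.1, lt_of_lt_of_le hx.2 hb⟩)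
  have hΦmono : ∀ a b : ℝ, 0 ≤ a → a ≤ b → b ≤ 1 →
      (∫ s in (0:ℝ)..a, |α s| ^ p) ≤ ∫ s in (0:ℝ)..b, |α s| ^ p := by
    intro a b ha hab hb
    have h1 := hIIp 0 a le_rfl ha (hab.trans hb)
    have h2 := hIIp a b ha hab hb
    rw [← intervalIntegral.integral_add_adjacent_intervals h1 h2]
    have h3 : 0 ≤ ∫ s in a..b, |α s| ^ p :=
      intervalIntegral.integral_nonneg hab (fun u _ => hnnp u)
    linarith
  have hΦnn : ∀ b : ℝ, 0 ≤ b → 0 ≤ ∫ s in (0:ℝ)..b, |α s| ^ p := fun b hb =>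
    intervalIntegral.integral_nonneg hb (fun u _ => hnnp u)
  have hFnn : ∀ b : ℝ, 0 ≤ b → 0 ≤ ∫ s in (0:ℝ)..b, |α s| := fun b hb =>
    intervalIntegral.integral_nonneg hb (fun u _ => hnn u)
  have hold : ∀ a b : ℝ, 0 ≤ a → a ≤ b → b ≤ 1 →
      ∫ s in a..b, |α s| ≤ (b - a) ^ (1 - 1/p) * (∫ s in a..b, |α s| ^ p) ^ (1/p) :=
    fun a b ha hab hb => rh_holder_piece hp hnn hmem ha hab hb
  -- key decay step
  have hkey : ∀ h ∈ Ioc (0:ℝ) 1,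
      (∫ s in (0:ℝ)..(δ*h), |α s| ^ p) ≤ t₀ * ∫ s in (0:ℝ)..h, |α s| ^ p := by
    intro h hh
    obtain ⟨hh0, hh1⟩ := hh
    set Φh := ∫ s in (0:ℝ)..h, |α s| ^ p with hΦh
    set Fh := ∫ s in (0:ℝ)..h, |α s| with hFh
    set aa := ∫ s in (0:ℝ)..(δ*h), |α s| ^ p with haa
    clear_value Φh Fh aa
    have hδh0 : 0 < δ*h := mul_pos hδ0 hh0
    have hδhh : δ*h ≤ h := by nlinarith
    have hδh1 : δ*h ≤ 1 := hδhh.trans hh1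
    have haΦ : aa ≤ Φh := by rw [haa, hΦh]; exact hΦmono (δ*h) h hδh0.le hδhh hh1
    have ha0 : 0 ≤ aa := by rw [haa]; exact hΦnn _ hδh0.le
    by_contra hcon
    push_neg at hcon
    have hΦpos : 0 < Φh := by
      by_contra hle
      push_neg at hle
      have h1 : Φh ≤ t₀ * Φh := by nlinarith
      linarith
    have hΦ0 : 0 ≤ Φh := hΦpos.le
    have hFh0 : 0 ≤ Fh := by rw [hFh]; exact hFnn h hh0.le
    have hyph := hyp h ⟨hh0, hh1⟩
    rw [← hΦh, ← hFh] at hyph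
    rw [Real.mul_rpow (by positivity) hFh0] at hyph
    have E3 : Φh ≤ A * (h * (1/h)^p) * Fh^p := by
      have h5 := mul_le_mul_of_nonneg_left hyph hh0.le
      calc Φh = h * ((1/h) * Φh) := by
            rw [← mul_assoc, mul_one_div_cancel hh0.ne', one_mul]
        _ ≤ h * (A * ((1/h)^p * Fh^p)) := h5
        _ = A * (h * (1/h)^p) * Fh^p := by ring
    have hsplit : Fh = (∫ s in (0:ℝ)..(δ*h), |α s|) + ∫ s in (δ*h)..h, |α s| := by
      rw [hFh]
      exact (intervalIntegral.integral_add_adjacent_intervals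
        (hIIf 0 (δ*h) le_rfl hδh0.le hδh1) (hIIf (δ*h) h hδh0.le hδhh hh1)).symm
    have htail : (∫ s in (δ*h)..h, |α s| ^ p) = Φh - aa := by
      have h6 := intervalIntegral.integral_add_adjacent_intervals
        (hIIp 0 (δ*h) le_rfl hδh0.le hδh1) (hIIp (δ*h) h hδh0.le hδhh hh1)
      rw [← hΦh, ← haa] at h6
      linarith
    have h1 : (∫ s in (0:ℝ)..(δ*h), |α s|) ≤ (δ*h)^(1-1/p) * aa^(1/p) := by
      have h7 := hold 0 (δ*h) le_rfl hδh0.le hδh1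
      rw [sub_zero, ← haa] at h7
      exact h7
    have h2 : (∫ s in (δ*h)..h, |α s|) ≤ h^(1-1/p) * (Φh - aa)^(1/p) := by
      have h2a := hold (δ*h) h hδh0.le hδhh hh1
      rw [htail] at h2a
      refine h2a.trans ?_
      have h8 : (h - δ*h)^(1-1/p) ≤ h^(1-1/p) :=
        Real.rpow_le_rpow (by linarith) (by linarith)
          (by rw [sub_nonneg, div_le_one hp0]; exact hp.le)
      exact mul_le_mul_of_nonneg_right h8 (Real.rpow_nonneg (by linarith) _)
    have hδpow : δ ^ (1-1/p) = b3 := by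
      rw [hδdef, ← Real.rpow_mul hb30.le,
        show p/(p-1)*(1-1/p) = 1 by field_simp, Real.rpow_one]
    have hsum : Fh < 2 * b3 * h^(1-1/p) * Φh^(1/p) := by
      have ht1 : (δ*h)^(1-1/p) * aa^(1/p) ≤ b3 * h^(1-1/p) * Φh^(1/p) := by
        rw [Real.mul_rpow hδ0.le hh0.le, hδpow]
        have h9 : aa^(1/p) ≤ Φh^(1/p) := Real.rpow_le_rpow ha0 haΦ (by positivity)
        have hb : 0 ≤ b3 * h^(1-1/p) := by positivity
        exact mul_le_mul_of_nonneg_left h9 hb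
      have ht2 : h^(1-1/p) * (Φh - aa)^(1/p) < h^(1-1/p) * (b3 * Φh^(1/p)) := by
        have htΦ : t₀ * Φh = Φh - b3^p * Φh := by rw [ht₀def]; ring
        have hlt : Φh - aa < b3^p * Φh := by linarith
        have hr : (Φh - aa)^(1/p) < (b3^p * Φh)^(1/p) :=
          Real.rpow_lt_rpow (by linarith) hlt (by positivity)
        have he : (b3^p * Φh)^(1/p) = b3 * Φh^(1/p) := by
          rw [Real.mul_rpow hb3p0.le hΦ0, ← Real.rpow_mul hb30.le,
            mul_one_div_cancel hp0.ne', Real.rpow_one]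
        rw [he] at hr
        exact mul_lt_mul_of_pos_left hr (Real.rpow_pos_of_pos hh0 _)
      calc Fh = (∫ s in (0:ℝ)..(δ*h), |α s|) + ∫ s in (δ*h)..h, |α s| := hsplit
        _ ≤ (δ*h)^(1-1/p) * aa^(1/p) + h^(1-1/p) * (Φh-aa)^(1/p) := add_le_add h1 h2
        _ < b3*h^(1-1/p)*Φh^(1/p) + h^(1-1/p)*(b3*Φh^(1/p)) := add_lt_add_of_le_of_lt ht1 ht2
        _ = 2*b3*h^(1-1/p)*Φh^(1/p) := by ring
    have E4 : Fh^p < (2*b3*h^(1-1/p)*Φh^(1/p))^p := Real.rpow_lt_rpow hFh0 hsum hp0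
    have e2a : (h^(1-1/p))^p = h^(p-1) := by
      rw [← Real.rpow_mul hh0.le]; congr 1; field_simp
    have e2b : (Φh^(1/p))^p = Φh := by
      rw [← Real.rpow_mul hΦ0, one_div_mul_cancel hp0.ne', Real.rpow_one]
    have E2 : (2*b3*h^(1-1/p)*Φh^(1/p))^p = (2*b3)^p * (h^(p-1) * Φh) := by
      rw [Real.mul_rpow (by positivity) (Real.rpow_nonneg hΦ0 _),
          Real.mul_rpow (by positivity) (Real.rpow_nonneg hh0.le _), e2a, e2b]
      ring
    have hpow1 : h * (1/h)^p * h^(p-1) = 1 := by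
      rw [one_div, Real.inv_rpow hh0.le, ← Real.rpow_neg hh0.le]
      nth_rewrite 1 [← Real.rpow_one h]
      rw [← Real.rpow_add hh0, ← Real.rpow_add hh0,
        show (1:ℝ) + -p + (p-1) = 0 by ring, Real.rpow_zero]
    have hBp : B^p = A⁻¹ := by
      rw [hBdef, ← Real.rpow_mul hA0.le, show -(1/p)*p = -1 by field_simp,
        Real.rpow_neg hA0.le, Real.rpow_one]
    have hABp : A * (2*b3)^p = (2/3)^p := by
      rw [show (2*b3 : ℝ) = (2/3)*B by rw [hb3def]; ring,
        Real.mul_rpow (by norm_num) hB0.le, hBp]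
      field_simp
    have hfinal : Φh < (2/3)^p * Φh := by
      have hApos : 0 < A * (h*(1/h)^p) := by positivity
      calc Φh ≤ A*(h*(1/h)^p)*Fh^p := E3
        _ < A*(h*(1/h)^p)*((2*b3*h^(1-1/p)*Φh^(1/p))^p) := by
            exact mul_lt_mul_of_pos_left E4 hApos
        _ = (A*(2*b3)^p)*Φh * (h*(1/h)^p*h^(p-1)) := by rw [E2]; ring
        _ = (A*(2*b3)^p)*Φh := by rw [hpow1, mul_one]
        _ = (2/3)^p * Φh := by rw [hABp]
    have h23 : (2/3:ℝ)^p < 1 := Real.rpow_lt_one (by norm_num) (by norm_num) hp0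
    have h24 : (2/3:ℝ)^p * Φh < 1 * Φh := mul_lt_mul_of_pos_right h23 hΦpos
    rw [one_mul] at h24
    exact lt_irrefl Φh (hfinal.trans h24)
  -- iteration
  have hiter : ∀ n : ℕ,
      (∫ s in (0:ℝ)..(δ^n), |α s| ^ p) ≤ t₀^n * ∫ s in (0:ℝ)..1, |α s| ^ p := by
    intro n
    induction n with
    | zero => simp
    | succ n ih =>
      have hδn0 : 0 < δ^n := pow_pos hδ0 n
      have hδn1 : δ^n ≤ 1 := pow_le_one₀ hδ0.le hδ1.le
      calc (∫ s in (0:ℝ)..(δ^(n+1)), |α s| ^ p)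
          = ∫ s in (0:ℝ)..(δ*δ^n), |α s| ^ p := by rw [show δ^(n+1) = δ*δ^n by ring]
        _ ≤ t₀ * ∫ s in (0:ℝ)..(δ^n), |α s| ^ p := hkey (δ^n) ⟨hδn0, hδn1⟩
        _ ≤ t₀ * (t₀^n * ∫ s in (0:ℝ)..1, |α s| ^ p) := mul_le_mul_of_nonneg_left ih ht₀0.le
        _ = t₀^(n+1) * ∫ s in (0:ℝ)..1, |α s| ^ p := by ring
  -- conclusion
  intro h hh
  obtain ⟨hh0, hh1⟩ := hh
  have hexp : (0:ℝ) < 1 - 1/(p/(1-γ')) := by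
    rw [one_div_div]
    have : (1-γ')/p < 1 := (div_lt_one hp0).mpr (by linarith)
    linarith
  rcases hh0.eq_or_lt with heq | hhpos
  · rw [← heq]
    rw [intervalIntegral.integral_same, Real.zero_rpow hexp.ne', mul_zero]
  · have hex : ∃ m : ℕ, δ^m < h := exists_pow_lt_of_lt_one hhpos hδ1
    have hfind := Nat.find_spec hex
    have hn'0 : Nat.find hex ≠ 0 := by
      intro h0
      rw [h0, pow_zero] at hfind
      linarith
    obtain ⟨n, hn⟩ := Nat.exists_eq_succ_of_ne_zero hn'0
    have hlt : δ^(n+1) < h := by rw [hn] at hfind; simpa [pow_succ] using hfind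
    have hge : h ≤ δ^n := not_lt.mp (Nat.find_min hex (by omega))
    have hδn1 : δ^n ≤ 1 := pow_le_one₀ hδ0.le hδ1.le
    set Φ1 := ∫ s in (0:ℝ)..1, |α s| ^ p with hΦ1
    have hΦ1nn : 0 ≤ Φ1 := by rw [hΦ1]; exact hΦnn 1 one_pos.le
    have ht₀n : t₀^n ≤ δ^(-γ) * h^γ' := by
      have e1 : (t₀:ℝ)^n = ((δ^n:ℝ))^γ := by
        rw [← hδγ, ← Real.rpow_natCast (δ^γ) n, ← Real.rpow_mul hδ0.le, mul_comm,
          Real.rpow_mul hδ0.le, Real.rpow_natCast]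
      have e2 : ((δ^n:ℝ))^γ = δ^(-γ) * ((δ^(n+1):ℝ))^γ := by
        rw [show (δ^(n+1):ℝ) = δ^n * δ from pow_succ δ n,
          Real.mul_rpow (pow_pos hδ0 n).le hδ0.le, Real.rpow_neg hδ0.le]
        have hδγ0 : (δ:ℝ)^γ ≠ 0 := (Real.rpow_pos_of_pos hδ0 γ).ne'
        field_simp
      have e3 : ((δ^(n+1):ℝ))^γ ≤ h^γ :=
        Real.rpow_le_rpow (pow_pos hδ0 _).le hlt.le hγ0.le
      have e4 : h^γ ≤ h^γ' := Real.rpow_le_rpow_of_exponent_ge hhpos hh1 hγ'γ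
      calc t₀^n = δ^(-γ) * ((δ^(n+1):ℝ))^γ := by rw [e1, e2]
        _ ≤ δ^(-γ) * h^γ := mul_le_mul_of_nonneg_left e3 (Real.rpow_nonneg hδ0.le _)
        _ ≤ δ^(-γ) * h^γ' := mul_le_mul_of_nonneg_left e4 (Real.rpow_nonneg hδ0.le _)
    have hΦh : (∫ s in (0:ℝ)..h, |α s| ^ p) ≤ δ^(-γ) * h^γ' * Φ1 := by
      calc (∫ s in (0:ℝ)..h, |α s|^p) ≤ ∫ s in (0:ℝ)..(δ^n), |α s|^p :=
            hΦmono h (δ^n) hhpos.le hge hδn1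
        _ ≤ t₀^n * Φ1 := hiter n
        _ ≤ δ^(-γ) * h^γ' * Φ1 := mul_le_mul_of_nonneg_right ht₀n hΦ1nn
    have hH := hold 0 h le_rfl hhpos.le hh1
    rw [sub_zero] at hH
    have hrp : ((∫ s in (0:ℝ)..h, |α s|^p))^(1/p) ≤ (δ^(-γ))^(1/p) * (h^γ')^(1/p) * Φ1^(1/p) := by
      have h10 := Real.rpow_le_rpow (hΦnn h hhpos.le) hΦh (by positivity : (0:ℝ) ≤ 1/p)
      rw [Real.mul_rpow (by positivity) hΦ1nn, Real.mul_rpow (by positivity) (by positivity)]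
        at h10
      exact h10
    have eC : ((δ:ℝ)^(-γ))^(1/p) = δ^(-(γ/p)) := by
      rw [← Real.rpow_mul hδ0.le]; congr 1; ring
    have eh : ((h:ℝ)^γ')^(1/p) = h^(γ'/p) := by
      rw [← Real.rpow_mul hhpos.le]; congr 1; ring
    calc ∫ s in (0:ℝ)..h, |α s|
        ≤ h^(1-1/p) * ((∫ s in (0:ℝ)..h, |α s|^p))^(1/p) := hH
      _ ≤ h^(1-1/p) * (δ^(-(γ/p)) * h^(γ'/p) * Φ1^(1/p)) := by
          rw [← eC, ← eh]
          exact mul_le_mul_of_nonneg_left hrp (Real.rpow_nonneg hhpos.le _)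
      _ = δ^(-(γ/p)) * Φ1^(1/p) * (h^(1-1/p) * h^(γ'/p)) := by ring
      _ = δ^(-(γ/p)) * Φ1^(1/p) * h^(1 - 1/(p/(1-γ'))) := by
          rw [← Real.rpow_add hhpos]
          congr 1
          rw [one_div_div]
          field_simp
          ring
end

section
/- Let A > 1 and p > 1, and consider the function φ(s) = s^p − A(1 − p + p s) on [0,∞). Then φ has exactly two roots; the smallest root γ belongs to the open interval (1 − 1/p, A^{1/(p−1)}), the other root is larger than A^{1/(p−1)}, and moreover for every s ≥ 0, φ(s) ≤ 0 implies s ≥ γ. -/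
open Real Set

-- secant lemma for strictly convex functions
lemma conv_aux {f : ℝ → ℝ} (hf : StrictConvexOn ℝ (Set.Ici 0) f) {x y z : ℝ}
    (hx : 0 ≤ x) (hxy : x < y) (hyz : y < z) :
    f y < ((z - y) / (z - x)) * f x + ((y - x) / (z - x)) * f z := by
  have hxz : x < z := hxy.trans hyz
  have hzx : (0:ℝ) < z - x := by linarith
  have ha : (0:ℝ) < (z - y) / (z - x) := by apply div_pos <;> linarith
  have hb : (0:ℝ) < (y - x) / (z - x) := by apply div_pos <;> linarith
  have hab : (z - y) / (z - x) + (y - x) / (z - x) = 1 := by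
    field_simp
    ring
  have hz0 : (0:ℝ) ≤ z := by linarith
  have := hf.2 (Set.mem_Ici.2 hx) (Set.mem_Ici.2 hz0) (ne_of_lt hxz) ha hb hab
  have hcomb : ((z - y) / (z - x)) • x + ((y - x) / (z - x)) • z = y := by
    simp only [smul_eq_mul]
    field_simp
    ring
  rw [hcomb] at this
  simpa using this

/-- for `A > 1`, `p > 1`, the function `φ(s) = s^p - A(1-p+ps)` on `[0,∞)`
has exactly two roots; the smallest root `γ` lies in `(1-1/p, A^{1/(p-1)})`, the other root is
larger than `A^{1/(p-1)}`, and `φ(s) ≤ 0` implies `s ≥ γ` for `s ≥ 0`. -/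
theorem roots_of_phi (A p : ℝ) (hA : 1 < A) (hp : 1 < p) :
    ∃ γ γ' : ℝ, γ < γ' ∧
      γ ^ p - A * (1 - p + p * γ) = 0 ∧
      γ' ^ p - A * (1 - p + p * γ') = 0 ∧
      (∀ s : ℝ, 0 ≤ s → s ^ p - A * (1 - p + p * s) = 0 → s = γ ∨ s = γ') ∧
      1 - 1 / p < γ ∧ γ < A ^ (1 / (p - 1)) ∧ A ^ (1 / (p - 1)) < γ' ∧
      (∀ s : ℝ, 0 ≤ s → s ^ p - A * (1 - p + p * s) ≤ 0 → γ ≤ s) := by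
  set φ : ℝ → ℝ := fun s => s ^ p - A * (1 - p + p * s) with hφdef
  have hA0 : (0:ℝ) < A := by linarith
  have hp0 : (0:ℝ) < p := by linarith
  have hp1 : (0:ℝ) < p - 1 := by linarith
  -- continuity
  have hcont : Continuous φ := by
    have h1 : Continuous fun s : ℝ => s ^ p := by
      apply continuous_iff_continuousAt.2
      intro x
      exact Real.continuousAt_rpow_const x p (Or.inr hp0.le)
    fun_prop
  -- strict convexity
  have hconv : StrictConvexOn ℝ (Set.Ici 0) φ := by
    have h1 : StrictConvexOn ℝ (Set.Ici 0) fun s : ℝ => s ^ p := strictConvexOn_rpow hp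
    have h2 : ConcaveOn ℝ (Set.Ici (0:ℝ)) (fun s : ℝ => A * (1 - p + p * s)) := by
      constructor
      · exact convex_Ici 0
      · intro x _ y _ a b ha hb hab
        simp only [smul_eq_mul]
        linear_combination (A * (1 - p)) * hab
    exact h1.sub_concaveOn h2
  set s₀ : ℝ := A ^ (1 / (p - 1)) with hs₀def
  have hs₀1 : 1 < s₀ := Real.one_lt_rpow_iff_of_pos hA0 |>.2 (Or.inl ⟨hA, by positivity⟩)
  have hs₀0 : (0:ℝ) < s₀ := by linarith
  -- φ 0 > 0
  have h0 : 0 < φ 0 := by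
    simp only [hφdef, Real.zero_rpow (ne_of_gt hp0), mul_zero, add_zero]
    nlinarith
  -- φ s₀ < 0
  have hs₀p : s₀ ^ p = A * s₀ := by
    have hexp : (1 / (p - 1)) * p = 1 + 1 / (p - 1) := by field_simp; ring
    rw [hs₀def, ← Real.rpow_mul hA0.le, hexp, Real.rpow_add hA0, Real.rpow_one]
  have hneg : φ s₀ < 0 := by
    simp only [hφdef, hs₀p]
    nlinarith [mul_pos (mul_pos hA0 hp1) (show (0:ℝ) < s₀ - 1 by linarith)]
  -- big M with φ M > 0
  obtain ⟨M, hM1, hMs₀, hMpos⟩ : ∃ M : ℝ, 1 ≤ M ∧ s₀ < M ∧ 0 < φ M := by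
    refine ⟨max (s₀ + 1) ((A * p + 1) ^ (1 / (p - 1)) + 1), ?_, ?_, ?_⟩
    · have := le_max_left (s₀ + 1) ((A * p + 1) ^ (1 / (p - 1)) + 1); linarith
    · have := le_max_left (s₀ + 1) ((A * p + 1) ^ (1 / (p - 1)) + 1); linarith
    · set M := max (s₀ + 1) ((A * p + 1) ^ (1 / (p - 1)) + 1) with hMdef
      have hM1 : 1 ≤ M := by
        have := le_max_left (s₀ + 1) ((A * p + 1) ^ (1 / (p - 1)) + 1); linarith
      have hMge : (A * p + 1) ^ (1 / (p - 1)) ≤ M := by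
        have := le_max_right (s₀ + 1) ((A * p + 1) ^ (1 / (p - 1)) + 1); linarith
      have hAp1 : (0:ℝ) < A * p + 1 := by positivity
      have hkey : A * p + 1 ≤ M ^ (p - 1) := by
        calc A * p + 1 = ((A * p + 1) ^ (1 / (p - 1))) ^ (p - 1) := by
              have hexp : (1 / (p - 1)) * (p - 1) = 1 := by field_simp
              rw [← Real.rpow_mul hAp1.le, hexp, Real.rpow_one]
          _ ≤ M ^ (p - 1) := by
              apply Real.rpow_le_rpow (by positivity) hMge hp1.le
      have hMp : M ^ p = M ^ (p - 1) * M := by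
        rw [← Real.rpow_add_one (by linarith : M ≠ 0)]
        ring_nf
      have h2 : (A * p + 1) * M ≤ M ^ p := by
        rw [hMp]
        have := mul_le_mul_of_nonneg_right hkey (by linarith : (0:ℝ) ≤ M)
        linarith
      simp only [hφdef]
      nlinarith
  -- first root
  obtain ⟨γ, hγmem, hγ⟩ : ∃ γ ∈ Ioo (0:ℝ) s₀, φ γ = 0 := by
    have := intermediate_value_Ioo' hs₀0.le hcont.continuousOn (a := 0) (b := s₀)
    have h00 : (0:ℝ) ∈ Ioo (φ s₀) (φ 0) := ⟨hneg, h0⟩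
    obtain ⟨γ, hγmem, hγ⟩ := this h00
    exact ⟨γ, hγmem, hγ⟩
  -- second root
  obtain ⟨γ', hγ'mem, hγ'⟩ : ∃ γ' ∈ Ioo s₀ M, φ γ' = 0 := by
    have := intermediate_value_Ioo hMs₀.le hcont.continuousOn (a := s₀) (b := M)
    have h00 : (0:ℝ) ∈ Ioo (φ s₀) (φ M) := ⟨hneg, hMpos⟩
    obtain ⟨γ', hγ'mem, hγ'⟩ := this h00
    exact ⟨γ', hγ'mem, hγ'⟩
  have hγ0 : 0 < γ := hγmem.1
  have hγs₀ : γ < s₀ := hγmem.2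
  have hs₀γ' : s₀ < γ' := hγ'mem.1
  have hγγ' : γ < γ' := hγs₀.trans hs₀γ'
  -- sign facts
  have hposleft : ∀ s : ℝ, 0 ≤ s → s < γ → 0 < φ s := by
    intro s hs hsγ
    have := conv_aux hconv hs hsγ hγs₀
    rw [hγ] at this
    have ha : 0 < (s₀ - γ) / (s₀ - s) := by apply div_pos <;> linarith
    have hb : 0 < (γ - s) / (s₀ - s) := by apply div_pos <;> linarith
    by_contra hcon
    push_neg at hcon
    nlinarith [mul_pos hb (neg_pos.2 hneg), mul_nonneg ha.le (neg_nonneg.2 hcon)]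
  have hnegmid : ∀ s : ℝ, γ < s → s < γ' → φ s < 0 := by
    intro s h1 h2
    have := conv_aux hconv hγ0.le h1 h2
    rw [hγ, hγ'] at this
    simpa using this
  have hposright : ∀ s : ℝ, γ' < s → 0 < φ s := by
    intro s h1
    have := conv_aux hconv hs₀0.le hs₀γ' h1
    rw [hγ'] at this
    have ha : 0 < (s - γ') / (s - s₀) := by apply div_pos <;> linarith
    have hb : 0 < (γ' - s₀) / (s - s₀) := by apply div_pos <;> linarith
    by_contra hcon
    push_neg at hcon
    nlinarith [mul_pos ha (neg_pos.2 hneg), mul_nonneg hb.le (neg_nonneg.2 hcon)]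
  refine ⟨γ, γ', hγγ', hγ, hγ', ?_, ?_, hγs₀, hs₀γ', ?_⟩
  · intro s hs hroot
    rcases lt_trichotomy s γ with h | h | h
    · exact absurd hroot (by have := hposleft s hs h; simp only [hφdef] at this ⊢; linarith)
    · exact Or.inl h
    · rcases lt_trichotomy s γ' with h2 | h2 | h2
      · exact absurd hroot (by have := hnegmid s h h2; simp only [hφdef] at this ⊢; linarith)
      · exact Or.inr h2
      · exact absurd hroot (by have := hposright s h2; simp only [hφdef] at this ⊢; linarith)
  · -- 1 - 1/p < γ
    by_contra hcon
    push_neg at hcon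
    have hq0 : (0:ℝ) < 1 - 1 / p := by
      have : 1 / p < 1 := by rw [div_lt_one hp0]; linarith
      linarith
    have hqval : φ (1 - 1 / p) = (1 - 1/p) ^ p := by
      simp only [hφdef]
      have : 1 - p + p * (1 - 1 / p) = 0 := by field_simp; ring
      rw [this]
      ring
    have hqpos : 0 < φ (1 - 1 / p) := by
      rw [hqval]; exact Real.rpow_pos_of_pos hq0 p
    rcases eq_or_lt_of_le hcon with h | h
    · rw [← h, hγ] at hqpos; linarith
    · have hlt : 1 - 1/p < γ' := by
        have h1p : 0 < 1/p := by positivity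
        linarith
      have := hnegmid (1 - 1/p) h hlt
      linarith
  · intro s hs hle
    by_contra hcon
    push_neg at hcon
    have := hposleft s hs hcon
    simp only [hφdef] at this hle
    linarith
end

section
/- Let C > 0 and θ > p be the constants of the estimate ∫_{t₀}^{t₀+h} |x̄'(s)| ds ≤ C (T−t₀)^{1/θ−1/p} h^{1−1/θ} valid for all optimal curves x̄ (depending only on M, δ, p, T). Then there is a constant K₁ = K₁(M,δ,p,T) such that for all x₀, x₁ ∈ ℝ^N and all t₀ ∈ [0,T), if |x₁ − x₀| ≤ min{ C (1 − p/θ)/(p−1) · (T−t₀)^{1−1/p}, 1 }, then u(x₁,t₀) − u(x₀,t₀) ≤ K₁ (T−t₀)^{−(p−1)(θ−p)/(p(θ−1))} |x₁ − x₀|^{(θ−p)/(θ−1)}. -/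
open MeasureTheory Set intervalIntegral

noncomputable section

-- lemma: costOf bounded below, valueFn le cost
section
variable {N : ℕ} {T p M δ : ℝ} {a : EuclideanSpace ℝ (Fin N) → ℝ → ℝ}
  {f : EuclideanSpace ℝ (Fin N) → ℝ → EuclideanSpace ℝ (Fin N)}
  {g : EuclideanSpace ℝ (Fin N) → ℝ}

lemma costOf_ge (hyp : StandardHyps T M δ a f g) (hδ : 0 < δ)
    {x : EuclideanSpace ℝ (Fin N)} {t : ℝ} (ht : t ∈ Icc 0 T)
    (v : ℝ → EuclideanSpace ℝ (Fin N)) : -M ≤ costOf T p a f g x t v := by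
  obtain ⟨-, -, -, haM, -, hgM, haδ⟩ := hyp
  have h1 : 0 ≤ ∫ s in t..T, a (curveOf x t v s) s * ‖f (curveOf x t v s) s + v s‖ ^ p := by
    apply intervalIntegral.integral_nonneg ht.2
    intro u hu
    have hu' : u ∈ Icc (0:ℝ) T := ⟨le_trans ht.1 hu.1, hu.2⟩
    exact mul_nonneg (le_trans hδ.le (haδ _ _ hu')) (Real.rpow_nonneg (norm_nonneg _) _)
  have h2 : -M ≤ g (curveOf x t v T) := neg_le_of_abs_le (hgM _)
  unfold costOf; linarith

lemma valueFn_le_costOf (hyp : StandardHyps T M δ a f g) (hδ : 0 < δ)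
    {x : EuclideanSpace ℝ (Fin N)} {t : ℝ} (ht : t ∈ Icc 0 T)
    {w : ℝ → EuclideanSpace ℝ (Fin N)} (hw : AdmissibleDeriv T p t w) :
    valueFn T p a f g x t ≤ costOf T p a f g x t w := by
  apply csInf_le
  · exact ⟨-M, by rintro c ⟨v', -, rfl⟩; exact costOf_ge hyp hδ ht v'⟩
  · exact ⟨w, hw, rfl⟩
end

open scoped ENNReal
lemma rpow_sum_le {A B p : ℝ} (hA : 0 ≤ A) (hB : 0 ≤ B) (hp : 0 ≤ p) :
    (A + B) ^ p ≤ 2 ^ p * (A ^ p + B ^ p) := by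
  have h1 : A + B ≤ 2 * max A B := by
    rcases le_total A B with h | h
    · simpa [max_eq_right h] using by linarith
    · simpa [max_eq_left h] using by linarith
  have h2 : (A + B) ^ p ≤ (2 * max A B) ^ p :=
    Real.rpow_le_rpow (by linarith) h1 hp
  have h3 : (2 * max A B) ^ p = 2 ^ p * (max A B) ^ p :=
    Real.mul_rpow (by norm_num) (le_max_of_le_left hA)
  have h4 : (max A B) ^ p ≤ A ^ p + B ^ p := by
    rcases le_total A B with h | h
    · rw [max_eq_right h]; nlinarith [Real.rpow_nonneg hA p]
    · rw [max_eq_left h]; nlinarith [Real.rpow_nonneg hB p]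
  have h5 : (0:ℝ) < 2 ^ p := Real.rpow_pos_of_pos (by norm_num) p
  calc (A+B)^p ≤ 2^p * (max A B)^p := by rw [← h3]; exact h2
    _ ≤ 2^p * (A^p + B^p) := by nlinarith

section
variable {N : ℕ} {T p M δ : ℝ} {a : EuclideanSpace ℝ (Fin N) → ℝ → ℝ}
  {f : EuclideanSpace ℝ (Fin N) → ℝ → EuclideanSpace ℝ (Fin N)}
  {g : EuclideanSpace ℝ (Fin N) → ℝ}

lemma core_estimate (hyp : StandardHyps T M δ a f g) (hT : 0 < T) (hp : 1 < p)
    (hM : 0 < M) (hδ : 0 < δ)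
    {x₀ x₁ : EuclideanSpace ℝ (Fin N)} {t₀ : ℝ} (ht₀ : t₀ ∈ Ico 0 T)
    {v : ℝ → EuclideanSpace ℝ (Fin N)} (hv : IsOptimalCurve T p a f g x₀ t₀ v)
    {h : ℝ} (hh0 : 0 < h) (hhT : h ≤ T - t₀) :
    valueFn T p a f g x₁ t₀ - valueFn T p a f g x₀ t₀ ≤
      M * (M + ‖curveOf x₀ t₀ v (t₀ + h) - x₁‖ / h) ^ p * h := by
  obtain ⟨ha_cont, hf_cont, hg_cont, haM, hfM, hgM, haδ⟩ := id hyp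
  obtain ⟨hvadm, hvopt⟩ := hv
  have ht0 : (0:ℝ) ≤ t₀ := ht₀.1
  have htT : t₀ ≤ T := ht₀.2.le
  set b := t₀ + h with hb_def
  have htb : t₀ ≤ b := by simp [hb_def]; linarith
  have hbT : b ≤ T := by simp [hb_def]; linarith
  set z := curveOf x₀ t₀ v b with hz_def
  set c := h⁻¹ • (z - x₁) with hc_def
  set w : ℝ → EuclideanSpace ℝ (Fin N) := fun s => if s ≤ b then c else v s with hw_def
  haveI : Fact (volume (Icc t₀ T) < ⊤) := ⟨measure_Icc_lt_top⟩
  have hp1 : (1:ℝ≥0∞) ≤ ENNReal.ofReal p := by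
    rw [← ENNReal.ofReal_one]; exact ENNReal.ofReal_le_ofReal hp.le
  have hvL1 : IntegrableOn v (Icc t₀ T) volume := hvadm.integrable hp1
  have hwmem : MemLp w (ENNReal.ofReal p) (volume.restrict (Icc t₀ T)) := by
    have heq : w = fun s => (Iic b).indicator (fun _ => c) s + (Ioi b).indicator v s := by
      funext s
      by_cases hs : s ≤ b
      · simp [hw_def, hs, indicator_of_mem (mem_Iic.mpr hs),
          indicator_of_notMem (by simpa using hs : s ∉ Ioi b)]
      · simp [hw_def, hs, indicator_of_notMem (by simpa using hs : s ∉ Iic b),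
          indicator_of_mem (mem_Ioi.mpr (lt_of_not_ge hs))]
    rw [heq]
    exact ((memLp_const c).indicator measurableSet_Iic).add (hvadm.indicator measurableSet_Ioi)
  have hwadm : AdmissibleDeriv T p t₀ w := hwmem
  have hwL1 : IntegrableOn w (Icc t₀ T) volume := hwmem.integrable hp1
  -- interval integrability helpers
  have hII : ∀ (F : ℝ → EuclideanSpace ℝ (Fin N)), IntegrableOn F (Icc t₀ T) volume →
      ∀ u u', t₀ ≤ u → u ≤ u' → u' ≤ T → IntervalIntegrable F volume u u' := by
    intro F hF u u' h1 h2 h3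
    have : IntegrableOn F (uIcc u u') volume := by
      rw [uIcc_of_le h2]; exact hF.mono_set (Icc_subset_Icc h1 h3)
    exact this.intervalIntegrable
  have hIIr : ∀ (F : ℝ → ℝ), IntegrableOn F (Icc t₀ T) volume →
      ∀ u u', t₀ ≤ u → u ≤ u' → u' ≤ T → IntervalIntegrable F volume u u' := by
    intro F hF u u' h1 h2 h3
    have : IntegrableOn F (uIcc u u') volume := by
      rw [uIcc_of_le h2]; exact hF.mono_set (Icc_subset_Icc h1 h3)
    exact this.intervalIntegrable
  -- curve identity on [b, T]
  have hwint_tb : (∫ r in t₀..b, w r) = z - x₁ := by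
    have h1 : (∫ r in t₀..b, w r) = ∫ r in t₀..b, (fun _ => c) r := by
      apply intervalIntegral.integral_congr
      intro s hs
      rw [uIcc_of_le htb] at hs
      simp only [hw_def]
      rw [if_pos hs.2]
    rw [h1, intervalIntegral.integral_const]
    have hbt : b - t₀ = h := by simp [hb_def]
    rw [hbt, hc_def, smul_smul, mul_inv_cancel₀ hh0.ne', one_smul]
  have hcur : ∀ s, b ≤ s → s ≤ T → curveOf x₁ t₀ w s = curveOf x₀ t₀ v s := by
    intro s h1 h2
    have hsplit : (∫ r in t₀..b, w r) + ∫ r in b..s, w r = ∫ r in t₀..s, w r :=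
      intervalIntegral.integral_add_adjacent_intervals
        (hII w hwL1 t₀ b le_rfl htb hbT) (hII w hwL1 b s htb h1 h2)
    have hsplitv : (∫ r in t₀..b, v r) + ∫ r in b..s, v r = ∫ r in t₀..s, v r :=
      intervalIntegral.integral_add_adjacent_intervals
        (hII v hvL1 t₀ b le_rfl htb hbT) (hII v hvL1 b s htb h1 h2)
    have hwv : (∫ r in b..s, w r) = ∫ r in b..s, v r := by
      apply intervalIntegral.integral_congr_ae
      filter_upwards with r
      intro hr'
      rw [uIoc_of_le h1] at hr'
      simp only [hw_def]
      rw [if_neg (not_le.mpr hr'.1)]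
    have hz' : z = x₀ + ∫ r in t₀..b, v r := rfl
    simp only [curveOf] at hz' ⊢
    rw [← hsplit, ← hsplitv, hwint_tb, hwv, hz']
    abel
  -- continuity of curves
  have hcont_prim : ∀ (u : ℝ → EuclideanSpace ℝ (Fin N)), IntegrableOn u (Icc t₀ T) volume →
      ∀ (x : EuclideanSpace ℝ (Fin N)), ContinuousOn (curveOf x t₀ u) (Icc t₀ T) := by
    intro u hu x
    have h2 : ContinuousOn (fun s => ∫ r in t₀..s, u r) (Icc t₀ T) := by
      have h3 : IntegrableOn u (uIcc t₀ T) volume := by rw [uIcc_of_le htT]; exact hu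
      have := intervalIntegral.continuousOn_primitive_interval (a := t₀) (b := T) h3
      rwa [uIcc_of_le htT] at this
    exact continuousOn_const.add h2
  -- integrability of the running cost
  have hFint : ∀ (x : EuclideanSpace ℝ (Fin N)) (u : ℝ → EuclideanSpace ℝ (Fin N)),
      MemLp u (ENNReal.ofReal p) (volume.restrict (Icc t₀ T)) →
      IntegrableOn (fun s => a (curveOf x t₀ u s) s * ‖f (curveOf x t₀ u s) s + u s‖ ^ p)
        (Icc t₀ T) volume := by
    intro x u hu
    have huL1 : IntegrableOn u (Icc t₀ T) volume := hu.integrable hp1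
    have hycont := hcont_prim u huL1 x
    set y := curveOf x t₀ u with hy_def
    have hmaps : MapsTo (fun s => (y s, s)) (Icc t₀ T) (univ ×ˢ Icc 0 T) := fun s hs =>
      ⟨mem_univ _, ⟨le_trans ht0 hs.1, hs.2⟩⟩
    have hacont : ContinuousOn (fun s => a (y s) s) (Icc t₀ T) :=
      ha_cont.comp (hycont.prodMk continuousOn_id) hmaps
    have hfcont : ContinuousOn (fun s => f (y s) s) (Icc t₀ T) :=
      hf_cont.comp (hycont.prodMk continuousOn_id) hmaps
    have hmeas : AEStronglyMeasurable (fun s => a (y s) s * ‖f (y s) s + u s‖ ^ p)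
        (volume.restrict (Icc t₀ T)) := by
      apply (hacont.aestronglyMeasurable measurableSet_Icc).mul
      have h1 : AEStronglyMeasurable (fun s => f (y s) s + u s) (volume.restrict (Icc t₀ T)) :=
        (hfcont.aestronglyMeasurable measurableSet_Icc).add hu.aestronglyMeasurable
      exact (Real.continuous_rpow_const (by positivity : (0:ℝ) ≤ p)).comp_aestronglyMeasurable
        h1.norm
    have hup : IntegrableOn (fun s => ‖u s‖ ^ p) (Icc t₀ T) volume := by
      have h2 := hu.integrable_norm_rpow (by simp; linarith) ENNReal.ofReal_ne_top
      rwa [ENNReal.toReal_ofReal (by linarith)] at h2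
    have hdom : IntegrableOn (fun s => M * (2 ^ p * (M ^ p + ‖u s‖ ^ p))) (Icc t₀ T) volume := by
      apply Integrable.const_mul; apply Integrable.const_mul
      exact (integrable_const _).add hup
    apply Integrable.mono hdom hmeas
    filter_upwards [ae_restrict_mem measurableSet_Icc] with s hs
    have hs0T : s ∈ Icc (0:ℝ) T := ⟨le_trans ht0 hs.1, hs.2⟩
    have ha0 : 0 ≤ a (y s) s := le_trans hδ.le (haδ _ _ hs0T)
    have haM' : a (y s) s ≤ M := (abs_le.mp (haM _ _ hs0T)).2
    have hfb : ‖f (y s) s + u s‖ ≤ M + ‖u s‖ := by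
      have := hfM (y s) s hs0T
      calc ‖f (y s) s + u s‖ ≤ ‖f (y s) s‖ + ‖u s‖ := norm_add_le _ _
        _ ≤ M + ‖u s‖ := by linarith
    have h1 : ‖f (y s) s + u s‖ ^ p ≤ (M + ‖u s‖) ^ p :=
      Real.rpow_le_rpow (norm_nonneg _) hfb (by linarith)
    have h2 : (M + ‖u s‖) ^ p ≤ 2 ^ p * (M ^ p + ‖u s‖ ^ p) :=
      rpow_sum_le hM.le (norm_nonneg _) (by linarith)
    have hX0 : (0:ℝ) ≤ ‖f (y s) s + u s‖ ^ p := Real.rpow_nonneg (norm_nonneg _) _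
    rw [Real.norm_eq_abs, Real.norm_eq_abs, abs_of_nonneg (mul_nonneg ha0 hX0),
      abs_of_nonneg (by positivity)]
    calc a (y s) s * ‖f (y s) s + u s‖ ^ p ≤ M * ‖f (y s) s + u s‖ ^ p :=
          mul_le_mul_of_nonneg_right haM' hX0
      _ ≤ M * (2 ^ p * (M ^ p + ‖u s‖ ^ p)) := by
          apply mul_le_mul_of_nonneg_left (le_trans h1 h2) hM.le
  -- the two running costs
  set F := fun s => a (curveOf x₁ t₀ w s) s * ‖f (curveOf x₁ t₀ w s) s + w s‖ ^ p with hF_def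
  set G := fun s => a (curveOf x₀ t₀ v s) s * ‖f (curveOf x₀ t₀ v s) s + v s‖ ^ p with hG_def
  have hFi : IntegrableOn F (Icc t₀ T) volume := hFint x₁ w hwmem
  have hGi : IntegrableOn G (Icc t₀ T) volume := hFint x₀ v hvadm
  have hstep1 : valueFn T p a f g x₁ t₀ - valueFn T p a f g x₀ t₀ ≤
      ∫ s in t₀..T, (F s - G s) := by
    have h1 : valueFn T p a f g x₁ t₀ ≤ costOf T p a f g x₁ t₀ w :=
      valueFn_le_costOf hyp hδ ⟨ht0, htT⟩ hwadm
    have h3 : curveOf x₁ t₀ w T = curveOf x₀ t₀ v T := hcur T hbT le_rfl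
    have h4 : (∫ s in t₀..T, (F s - G s)) = (∫ s in t₀..T, F s) - ∫ s in t₀..T, G s :=
      intervalIntegral.integral_sub (hIIr F hFi t₀ T le_rfl htT le_rfl)
        (hIIr G hGi t₀ T le_rfl htT le_rfl)
    have h5 : costOf T p a f g x₁ t₀ w = (∫ s in t₀..T, F s) + g (curveOf x₀ t₀ v T) := by
      unfold costOf; rw [h3]
    have h6 : costOf T p a f g x₀ t₀ v = (∫ s in t₀..T, G s) + g (curveOf x₀ t₀ v T) := rfl
    rw [h4]
    have h7 := hvopt
    linarith [h1, h5.symm.trans_le (le_of_eq h5)]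
  set B := M * (M + ‖z - x₁‖ / h) ^ p with hB_def
  have hFGII : ∀ u u', t₀ ≤ u → u ≤ u' → u' ≤ T →
      IntervalIntegrable (fun s => F s - G s) volume u u' := fun u u' h1 h2 h3 =>
    (hIIr F hFi u u' h1 h2 h3).sub (hIIr G hGi u u' h1 h2 h3)
  have hsplit : (∫ s in t₀..T, (F s - G s)) =
      (∫ s in t₀..b, (F s - G s)) + ∫ s in b..T, (F s - G s) :=
    (intervalIntegral.integral_add_adjacent_intervals (hFGII t₀ b le_rfl htb hbT)
      (hFGII b T htb hbT le_rfl)).symm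
  have hzero : (∫ s in b..T, (F s - G s)) = 0 := by
    rw [intervalIntegral.integral_congr_ae (g := fun _ => (0:ℝ)) ?_]
    · simp
    · filter_upwards with r
      intro hr
      rw [uIoc_of_le hbT] at hr
      have hw' : w r = v r := if_neg (not_le.mpr hr.1)
      have hy' : curveOf x₁ t₀ w r = curveOf x₀ t₀ v r := hcur r hr.1.le hr.2
      simp only [hF_def, hG_def, hw', hy', sub_self]
  have hmono : (∫ s in t₀..b, (F s - G s)) ≤ ∫ s in t₀..b, (fun _ => B) s := by
    apply intervalIntegral.integral_mono_on htb (hFGII t₀ b le_rfl htb hbT)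
      intervalIntegrable_const
    intro s hs
    have hs0T : s ∈ Icc (0:ℝ) T := ⟨le_trans ht0 hs.1, le_trans hs.2 hbT⟩
    have hw' : w s = c := if_pos hs.2
    have hG0 : 0 ≤ G s :=
      mul_nonneg (le_trans hδ.le (haδ _ _ hs0T)) (Real.rpow_nonneg (norm_nonneg _) _)
    have ha' : a (curveOf x₁ t₀ w s) s ≤ M := (abs_le.mp (haM _ _ hs0T)).2
    have hc' : ‖c‖ = ‖z - x₁‖ / h := by
      rw [hc_def, norm_smul, Real.norm_eq_abs, abs_inv, abs_of_pos hh0]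
      ring
    have hnorm : ‖f (curveOf x₁ t₀ w s) s + w s‖ ≤ M + ‖z - x₁‖ / h := by
      rw [hw']
      have h1 := hfM (curveOf x₁ t₀ w s) s hs0T
      calc ‖f (curveOf x₁ t₀ w s) s + c‖ ≤ ‖f (curveOf x₁ t₀ w s) s‖ + ‖c‖ := norm_add_le _ _
        _ ≤ M + ‖z - x₁‖ / h := by rw [hc']; linarith
    have hFle : F s ≤ B := by
      rw [hB_def]
      exact mul_le_mul ha' (Real.rpow_le_rpow (norm_nonneg _) hnorm
        (le_trans zero_le_one hp.le)) (Real.rpow_nonneg (norm_nonneg _) _) hM.le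
    show F s - G s ≤ B
    linarith
  have hconst : (∫ s in t₀..b, (fun _ => B) s) = B * h := by
    rw [intervalIntegral.integral_const]
    have hbt : b - t₀ = h := by simp [hb_def]
    rw [hbt]
    simp [mul_comm]
  have hfinal : valueFn T p a f g x₁ t₀ - valueFn T p a f g x₀ t₀ ≤ B * h := by
    linarith [hstep1, hsplit.le, hzero.le, hmono, hconst.le]
  calc valueFn T p a f g x₁ t₀ - valueFn T p a f g x₀ t₀ ≤ B * h := hfinal
    _ = M * (M + ‖z - x₁‖ / h) ^ p * h := by rw [hB_def]
end


set_option maxHeartbeats 1000000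

/-- space regularity: given the constants `C > 0`, `θ > p` of the integral
estimate for optimal curves, there is `K₁ = K₁(M,δ,p,T)` such that whenever
`|x₁ - x₀| ≤ min{C(1-p/θ)/(p-1) (T-t₀)^{1-1/p}, 1}`, one has
`u(x₁,t₀) - u(x₀,t₀) ≤ K₁ (T-t₀)^{-(p-1)(θ-p)/(p(θ-1))} |x₁-x₀|^{(θ-p)/(θ-1)}`. -/
theorem space_regularity_of_value_function
    (T p M δ : ℝ) (hT : 0 < T) (hp : 1 < p) (hM : 0 < M) (hδ : 0 < δ)
    (C θ : ℝ) (hC : 0 < C) (hθ : p < θ) :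
    ∃ K₁ > (0:ℝ),
      ∀ (N : ℕ), 1 ≤ N →
        ∀ (a : EuclideanSpace ℝ (Fin N) → ℝ → ℝ)
          (f : EuclideanSpace ℝ (Fin N) → ℝ → EuclideanSpace ℝ (Fin N))
          (g : EuclideanSpace ℝ (Fin N) → ℝ), StandardHyps T M δ a f g →
          -- every initial condition admits an optimal curve
          (∀ (x : EuclideanSpace ℝ (Fin N)) (t : ℝ), t ∈ Ico 0 T →
            ∃ v, IsOptimalCurve T p a f g x t v) →
          -- the integral estimate for optimal curves, with constants `C` and `θ`
          (∀ (x : EuclideanSpace ℝ (Fin N)) (t : ℝ), t ∈ Ico 0 T →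
            ∀ v : ℝ → EuclideanSpace ℝ (Fin N), IsOptimalCurve T p a f g x t v →
              ∀ h ∈ Icc 0 (T - t),
                ∫ s in t..t + h, ‖v s‖ ≤ C * (T - t) ^ (1 / θ - 1 / p) * h ^ (1 - 1 / θ)) →
          ∀ (x₀ x₁ : EuclideanSpace ℝ (Fin N)) (t₀ : ℝ), t₀ ∈ Ico 0 T →
            ‖x₁ - x₀‖ ≤ min (C * (1 - p / θ) / (p - 1) * (T - t₀) ^ (1 - 1 / p)) 1 →
            valueFn T p a f g x₁ t₀ - valueFn T p a f g x₀ t₀ ≤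
              K₁ * (T - t₀) ^ (-(p - 1) * (θ - p) / (p * (θ - 1))) *
                ‖x₁ - x₀‖ ^ ((θ - p) / (θ - 1)) := by
  have hp0 : (0:ℝ) < p := lt_trans one_pos hp
  have hθ1 : (1:ℝ) < θ := lt_trans hp hθ
  have hθ0 : (0:ℝ) < θ := lt_trans hp0 hθ
  have hθ1' : (0:ℝ) < θ - 1 := by linarith
  have hp1' : (0:ℝ) < p - 1 := by linarith
  have hθp : (0:ℝ) < θ - p := by linarith
  have hpne : p ≠ 0 := hp0.ne'
  have hθne : θ ≠ 0 := hθ0.ne'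
  have hθ1ne : θ - 1 ≠ 0 := hθ1'.ne'
  have hC'0 : (0:ℝ) < C * (1 - p / θ) / (p - 1) := by
    have h2 : p / θ < 1 := (div_lt_one hθ0).mpr hθ
    exact div_pos (mul_pos hC (by linarith)) hp1'
  have hpβ : (0:ℝ) < p - (θ - p) / (θ - 1) := by
    have e : p - (θ - p) / (θ - 1) = θ * (p - 1) / (θ - 1) := by field_simp; try ring
    rw [e]; positivity
  refine ⟨M * 2 ^ p * (M ^ p * (max 1 T + T) +
    (1 + C) ^ p * (1 + (C * (1 - p / θ) / (p - 1)) ^ (p - (θ - p) / (θ - 1)))), ?_, ?_⟩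
  · have h3 : (0:ℝ) < max 1 T + T := by
      have : (0:ℝ) < max 1 T := lt_max_of_lt_left one_pos
      linarith
    apply mul_pos (mul_pos hM (Real.rpow_pos_of_pos two_pos p))
    apply add_pos (mul_pos (Real.rpow_pos_of_pos hM p) h3)
    exact mul_pos (Real.rpow_pos_of_pos (by linarith) p)
      (add_pos one_pos (Real.rpow_pos_of_pos hC'0 _))
  intro N hN a f g hyp hexist hest x₀ x₁ t₀ ht₀ hmin
  have hτ0 : (0:ℝ) < T - t₀ := by have := ht₀.2; linarith
  set τ := T - t₀ with hτ_def
  set d := ‖x₁ - x₀‖ with hd_def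
  set α := -(p - 1) * (θ - p) / (p * (θ - 1)) with hα_def
  set β := (θ - p) / (θ - 1) with hβ_def
  set C' := C * (1 - p / θ) / (p - 1) with hC'_def
  have hβ0 : 0 < β := div_pos hθp hθ1'
  rcases eq_or_lt_of_le (norm_nonneg (x₁ - x₀)) with hd0 | hd0
  · -- trivial case x₁ = x₀
    have hx : x₁ = x₀ := by
      have h1 : ‖x₁ - x₀‖ = 0 := hd0.symm
      rwa [norm_sub_eq_zero_iff] at h1
    have hd0' : d = 0 := hd0.symm
    rw [hx, sub_self, hd0', Real.zero_rpow hβ0.ne', mul_zero]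
  -- main case
  have hd1 : d ≤ 1 := le_trans hmin (min_le_right _ _)
  have hdC' : d ≤ C' * τ ^ (1 - 1/p) := le_trans hmin (min_le_left _ _)
  set γ := θ / (θ - 1) with hγ_def
  set μ := (θ - p) / (p * (θ - 1)) with hμ_def
  have hγ0 : 0 < γ := div_pos hθ0 hθ1'
  have hμ0 : 0 < μ := div_pos hθp (by positivity)
  set h := min (d ^ γ * τ ^ μ) τ with hh_def
  have hh0 : 0 < h :=
    lt_min (mul_pos (Real.rpow_pos_of_pos hd0 γ) (Real.rpow_pos_of_pos hτ0 μ)) hτ0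
  have hhτ : h ≤ τ := min_le_right _ _
  obtain ⟨v, hv⟩ := hexist x₀ t₀ ht₀
  have hcore := core_estimate (x₁ := x₁) hyp hT hp hM hδ ht₀ hv hh0 hhτ
  have hest' := hest x₀ t₀ ht₀ v hv h ⟨hh0.le, hhτ⟩
  -- case dichotomy, with the key lower bound on d in the second case
  have hcase : h = d ^ γ * τ ^ μ ∨ (h = τ ∧ τ ^ (1 - 1/p) ≤ d) := by
    rcases le_total (d ^ γ * τ ^ μ) τ with hA | hB
    · exact Or.inl (by rw [hh_def]; exact min_eq_left hA)
    · refine Or.inr ⟨by rw [hh_def]; exact min_eq_right hB, ?_⟩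
      have h1 : τ ^ (1 - μ) ≤ d ^ γ := by
        have h2 : τ ^ (1 - μ) * τ ^ μ ≤ d ^ γ * τ ^ μ := by
          rw [← Real.rpow_add hτ0]
          simpa using hB
        exact le_of_mul_le_mul_right h2 (Real.rpow_pos_of_pos hτ0 μ)
      have h3 := Real.rpow_le_rpow (Real.rpow_nonneg hτ0.le _) h1
        (inv_nonneg.mpr hγ0.le)
      rw [← Real.rpow_mul hτ0.le, ← Real.rpow_mul hd0.le,
        mul_inv_cancel₀ hγ0.ne', Real.rpow_one] at h3
      rwa [show (1 - μ) * γ⁻¹ = 1 - 1/p by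
        rw [hμ_def, hγ_def]; field_simp; try ring] at h3
  -- bound on the connecting segment
  have hzb : ‖curveOf x₀ t₀ v (t₀ + h) - x₁‖ ≤ d + C * τ ^ (1/θ - 1/p) * h ^ (1 - 1/θ) := by
    have e1 : curveOf x₀ t₀ v (t₀ + h) - x₁ = (x₀ - x₁) + ∫ r in t₀..t₀ + h, v r := by
      simp only [curveOf]; abel
    rw [e1]
    refine le_trans (norm_add_le _ _) (add_le_add (le_of_eq (norm_sub_rev _ _)) ?_)
    calc ‖∫ r in t₀..t₀ + h, v r‖ ≤ ∫ r in t₀..t₀ + h, ‖v r‖ :=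
          intervalIntegral.norm_integral_le_integral_norm (by linarith)
      _ ≤ C * τ ^ (1/θ - 1/p) * h ^ (1 - 1/θ) := hest'
  have hkey : C * τ ^ (1/θ - 1/p) * h ^ (1 - 1/θ) ≤ C * d := by
    rcases hcase with hA | ⟨hA, hdlow⟩
    · have e2 : h ^ (1 - 1/θ) = d * τ ^ (1/p - 1/θ) := by
        rw [hA, Real.mul_rpow (Real.rpow_nonneg hd0.le _) (Real.rpow_nonneg hτ0.le _),
          ← Real.rpow_mul hd0.le, ← Real.rpow_mul hτ0.le,
          show γ * (1 - 1/θ) = 1 by rw [hγ_def]; field_simp,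
          show μ * (1 - 1/θ) = 1/p - 1/θ by rw [hμ_def]; field_simp; try ring,
          Real.rpow_one]
      rw [e2]
      have e3 : τ ^ (1/θ - 1/p) * τ ^ (1/p - 1/θ) = 1 := by
        rw [← Real.rpow_add hτ0]; norm_num
      calc C * τ ^ (1/θ - 1/p) * (d * τ ^ (1/p - 1/θ))
          = C * d * (τ ^ (1/θ - 1/p) * τ ^ (1/p - 1/θ)) := by ring
        _ = C * d := by rw [e3, mul_one]
        _ ≤ C * d := le_rfl
    · rw [hA, mul_assoc, ← Real.rpow_add hτ0,
        show 1/θ - 1/p + (1 - 1/θ) = 1 - 1/p by ring]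
      exact mul_le_mul_of_nonneg_left hdlow hC.le
  have hz2 : ‖curveOf x₀ t₀ v (t₀ + h) - x₁‖ ≤ (1 + C) * d := by
    have := le_trans hzb (by linarith : d + C * τ ^ (1/θ - 1/p) * h ^ (1 - 1/θ) ≤ d + C * d)
    linarith [this]
  -- chain of bounds
  have hM2 : M + ‖curveOf x₀ t₀ v (t₀ + h) - x₁‖ / h ≤ M + (1 + C) * d / h := by
    have := (div_le_div_iff_of_pos_right hh0).mpr hz2
    linarith
  have hXnn : (0:ℝ) ≤ M + ‖curveOf x₀ t₀ v (t₀ + h) - x₁‖ / h :=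
    add_nonneg hM.le (div_nonneg (norm_nonneg _) hh0.le)
  have hYnn : (0:ℝ) ≤ (1 + C) * d / h :=
    div_nonneg (mul_nonneg (by linarith) hd0.le) hh0.le
  have hstep : valueFn T p a f g x₁ t₀ - valueFn T p a f g x₀ t₀ ≤
      M * (M + (1 + C) * d / h) ^ p * h :=
    le_trans hcore (mul_le_mul_of_nonneg_right
      (mul_le_mul_of_nonneg_left (Real.rpow_le_rpow hXnn hM2 hp0.le) hM.le) hh0.le)
  have hsum : (M + (1 + C) * d / h) ^ p ≤ 2 ^ p * (M ^ p + ((1 + C) * d / h) ^ p) :=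
    rpow_sum_le hM.le hYnn hp0.le
  have hpow : ((1 + C) * d / h) ^ p * h = (1 + C) ^ p * (d ^ p * h ^ (1 - p)) := by
    rw [Real.div_rpow (mul_nonneg (by linarith) hd0.le) hh0.le,
      Real.mul_rpow (by linarith : (0:ℝ) ≤ 1 + C) hd0.le,
      show h ^ (1 - p) = h / h ^ p by rw [Real.rpow_sub hh0, Real.rpow_one]]
    field_simp
    ring
  have hchain : valueFn T p a f g x₁ t₀ - valueFn T p a f g x₀ t₀ ≤
      M * 2 ^ p * (M ^ p * h + (1 + C) ^ p * (d ^ p * h ^ (1 - p))) := by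
    calc valueFn T p a f g x₁ t₀ - valueFn T p a f g x₀ t₀
        ≤ M * (M + (1 + C) * d / h) ^ p * h := hstep
      _ ≤ M * (2 ^ p * (M ^ p + ((1 + C) * d / h) ^ p)) * h := by
          apply mul_le_mul_of_nonneg_right (mul_le_mul_of_nonneg_left hsum hM.le) hh0.le
      _ = M * 2 ^ p * (M ^ p * h + ((1 + C) * d / h) ^ p * h) := by ring
      _ = M * 2 ^ p * (M ^ p * h + (1 + C) ^ p * (d ^ p * h ^ (1 - p))) := by rw [hpow]
  -- claims
  set R := τ ^ α * d ^ β with hR_def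
  have hR0 : 0 < R := mul_pos (Real.rpow_pos_of_pos hτ0 α) (Real.rpow_pos_of_pos hd0 β)
  have claim1 : h ≤ (max 1 T + T) * R := by
    rcases hcase with hA | ⟨hA, hdlow⟩
    · have eγ : γ = β + p / (θ - 1) := by rw [hβ_def, hγ_def]; field_simp; try ring
      have eμ : μ = α + (θ - p) / (θ - 1) := by rw [hα_def, hμ_def]; field_simp; try ring
      have e3 : d ^ γ = d ^ β * d ^ (p / (θ - 1)) := by rw [eγ, Real.rpow_add hd0]
      have e4 : τ ^ μ = τ ^ α * τ ^ ((θ - p) / (θ - 1)) := by rw [eμ, Real.rpow_add hτ0]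
      have e5 : d ^ (p / (θ - 1)) ≤ 1 := Real.rpow_le_one hd0.le hd1 (by positivity)
      have e6 : τ ^ ((θ - p) / (θ - 1)) ≤ max 1 T := by
        rcases le_total τ 1 with hτ1 | hτ1
        · exact le_trans (Real.rpow_le_one hτ0.le hτ1 (by positivity)) (le_max_left _ _)
        · have e7 : (θ - p) / (θ - 1) ≤ 1 := by rw [div_le_one hθ1']; linarith
          have e8 := Real.rpow_le_rpow_of_exponent_le hτ1 e7
          rw [Real.rpow_one] at e8
          have hτT : τ ≤ T := by rw [hτ_def]; linarith [ht₀.1]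
          exact le_trans e8 (le_trans hτT (le_max_right _ _))
      have b1 : d ^ β * d ^ (p / (θ - 1)) ≤ d ^ β :=
        mul_le_of_le_one_right (Real.rpow_nonneg hd0.le _) e5
      have b2 : τ ^ α * τ ^ ((θ - p) / (θ - 1)) ≤ τ ^ α * max 1 T :=
        mul_le_mul_of_nonneg_left e6 (Real.rpow_nonneg hτ0.le _)
      calc h = (d ^ β * d ^ (p / (θ - 1))) * (τ ^ α * τ ^ ((θ - p) / (θ - 1))) := by
            rw [hA, e3, e4]; try ring
        _ ≤ d ^ β * (τ ^ α * max 1 T) := mul_le_mul b1 b2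
            (mul_nonneg (Real.rpow_nonneg hτ0.le _) (Real.rpow_nonneg hτ0.le _))
            (Real.rpow_nonneg hd0.le _)
        _ = max 1 T * R := by rw [hR_def]; ring
        _ ≤ (max 1 T + T) * R :=
            mul_le_mul_of_nonneg_right (by linarith) hR0.le
    · have i6 : α + (1 - 1/p) * β = 0 := by rw [hα_def, hβ_def]; field_simp; try ring
      have b3 : τ ^ ((1 - 1/p) * β) ≤ d ^ β := by
        have b3' := Real.rpow_le_rpow (Real.rpow_nonneg hτ0.le _) hdlow hβ0.le
        rwa [← Real.rpow_mul hτ0.le] at b3'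
      have b4 : (1:ℝ) ≤ R := by
        have h5 : τ ^ α * τ ^ ((1 - 1/p) * β) ≤ τ ^ α * d ^ β :=
          mul_le_mul_of_nonneg_left b3 (Real.rpow_nonneg hτ0.le _)
        rwa [← Real.rpow_add hτ0, i6, Real.rpow_zero] at h5
      have hτT : τ ≤ T := by rw [hτ_def]; linarith [ht₀.1]
      calc h = τ := hA
        _ ≤ T := hτT
        _ ≤ T * R := le_mul_of_one_le_right hT.le b4
        _ ≤ (max 1 T + T) * R := by
            refine mul_le_mul_of_nonneg_right ?_ hR0.le
            have := le_max_left (1:ℝ) T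
            linarith
  have claim2 : d ^ p * h ^ (1 - p) ≤ (1 + C' ^ (p - β)) * R := by
    have hCpβ : (0:ℝ) ≤ C' ^ (p - β) := (Real.rpow_pos_of_pos hC'0 _).le
    rcases hcase with hA | ⟨hA, hdlow⟩
    · have iA : p + γ * (1 - p) = β := by rw [hβ_def, hγ_def]; field_simp; try ring
      have iB : μ * (1 - p) = α := by rw [hα_def, hμ_def]; field_simp; try ring
      have e1 : d ^ p * h ^ (1 - p) = R := by
        rw [hA, Real.mul_rpow (Real.rpow_nonneg hd0.le _) (Real.rpow_nonneg hτ0.le _),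
          ← Real.rpow_mul hd0.le, ← Real.rpow_mul hτ0.le, iB, ← mul_assoc,
          ← Real.rpow_add hd0, iA, hR_def]
        ring
      rw [e1]
      exact le_mul_of_one_le_left hR0.le (by linarith)
    · have iC : (1 - 1/p) * (p - β) + (1 - p) = α := by rw [hα_def, hβ_def]; field_simp; try ring
      have e1 : d ^ p = d ^ β * d ^ (p - β) := by
        rw [← Real.rpow_add hd0, show β + (p - β) = p from by ring]
      have e2 : d ^ (p - β) ≤ C' ^ (p - β) * τ ^ ((1 - 1/p) * (p - β)) := by
        have e2' := Real.rpow_le_rpow hd0.le hdC' hpβ.le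
        rwa [Real.mul_rpow hC'0.le (Real.rpow_nonneg hτ0.le _),
          ← Real.rpow_mul hτ0.le] at e2'
      calc d ^ p * h ^ (1 - p) = d ^ β * d ^ (p - β) * τ ^ (1 - p) := by rw [hA, e1]
        _ ≤ d ^ β * (C' ^ (p - β) * τ ^ ((1 - 1/p) * (p - β))) * τ ^ (1 - p) :=
            mul_le_mul_of_nonneg_right
              (mul_le_mul_of_nonneg_left e2 (Real.rpow_nonneg hd0.le _))
              (Real.rpow_nonneg hτ0.le _)
        _ = C' ^ (p - β) * (d ^ β * (τ ^ ((1 - 1/p) * (p - β)) * τ ^ (1 - p))) := by ring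
        _ = C' ^ (p - β) * (d ^ β * τ ^ α) := by rw [← Real.rpow_add hτ0, iC]
        _ = C' ^ (p - β) * R := by rw [hR_def]; ring
        _ ≤ (1 + C' ^ (p - β)) * R :=
            mul_le_mul_of_nonneg_right (by linarith) hR0.le
  -- conclusion
  have hMp0 : (0:ℝ) ≤ M ^ p := (Real.rpow_pos_of_pos hM p).le
  have hCp0 : (0:ℝ) ≤ (1 + C) ^ p := (Real.rpow_pos_of_pos (by linarith) p).le
  have hM2p : (0:ℝ) ≤ M * 2 ^ p := (mul_pos hM (Real.rpow_pos_of_pos two_pos p)).le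
  have hfin : M * 2 ^ p * (M ^ p * h + (1 + C) ^ p * (d ^ p * h ^ (1 - p))) ≤
      M * 2 ^ p * (M ^ p * ((max 1 T + T) * R) + (1 + C) ^ p * ((1 + C' ^ (p - β)) * R)) := by
    apply mul_le_mul_of_nonneg_left _ hM2p
    exact add_le_add (mul_le_mul_of_nonneg_left claim1 hMp0)
      (mul_le_mul_of_nonneg_left claim2 hCp0)
  have efin : M * 2 ^ p * (M ^ p * ((max 1 T + T) * R) + (1 + C) ^ p * ((1 + C' ^ (p - β)) * R))
      = M * 2 ^ p * (M ^ p * (max 1 T + T) + (1 + C) ^ p * (1 + C' ^ (p - β))) * τ ^ α * d ^ β := by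
    rw [hR_def]; ring
  calc valueFn T p a f g x₁ t₀ - valueFn T p a f g x₀ t₀
      ≤ M * 2 ^ p * (M ^ p * h + (1 + C) ^ p * (d ^ p * h ^ (1 - p))) := hchain
    _ ≤ M * 2 ^ p * (M ^ p * ((max 1 T + T) * R) + (1 + C) ^ p * ((1 + C' ^ (p - β)) * R)) := hfin
    _ = _ := efin
end
end

section
/- Let A > 1 and p > 1, and let 𝓔 = { α ∈ L^p(0,1) : α ≥ 0 a.e., ‖α‖_{L^p} ≤ 1, and (1/h) ∫_0^h α(s)^p ds ≤ A ( (1/h) ∫_0^h α(s) ds )^p for all h ∈ (0,1] }. Then 𝓔 is a convex, closed and bounded subset of L^p(0,1). -/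
open MeasureTheory Set intervalIntegral
open scoped ENNReal

noncomputable section

/-- Lebesgue measure restricted to `(0,1)`. -/
def mu01 : Measure ℝ := volume.restrict (Ioo 0 1)

/-- The set `𝓔` of nonnegative `α ∈ L^p(0,1)` with `‖α‖_p ≤ 1` satisfying the reverse Hölder
condition `(1/h)∫_0^h α^p ≤ A((1/h)∫_0^h α)^p` for all `h ∈ (0,1]`. -/
def calE (A p : ℝ) : Set (Lp ℝ (ENNReal.ofReal p) mu01) :=
  {f | (∀ᵐ s ∂mu01, 0 ≤ f s) ∧ ‖f‖ ≤ 1 ∧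
    ∀ h ∈ Ioc (0:ℝ) 1,
      (1 / h) * ∫ s in (0:ℝ)..h, f s ^ p ≤ A * ((1 / h) * ∫ s in (0:ℝ)..h, f s) ^ p}

lemma nu_le {h : ℝ} (h1 : h ≤ 1) : volume.restrict (Ioc (0:ℝ) h) ≤ mu01 := by
  rw [Measure.restrict_congr_set Ioo_ae_eq_Ioc.symm]
  exact Measure.restrict_mono (Ioo_subset_Ioo le_rfl h1) le_rfl

instance : IsFiniteMeasure mu01 := by
  constructor
  rw [mu01, Measure.restrict_apply_univ]
  exact measure_Ioo_lt_top

lemma nu_fin (h : ℝ) : IsFiniteMeasure (volume.restrict (Ioc (0:ℝ) h)) := by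
  constructor
  rw [Measure.restrict_apply_univ]
  exact measure_Ioc_lt_top

lemma ae_nu {h : ℝ} (h1 : h ≤ 1) {prop : ℝ → Prop} (hm : ∀ᵐ s ∂mu01, prop s) :
    ∀ᵐ s ∂(volume.restrict (Ioc (0:ℝ) h)), prop s :=
  (Measure.absolutelyContinuous_of_le (nu_le h1)).ae_le hm

section aux
variable {p : ℝ} [Fact (1 ≤ ENNReal.ofReal p)]

lemma q_ne_zero (hp : 1 < p) : ENNReal.ofReal p ≠ 0 := by
  simp [ENNReal.ofReal_eq_zero, not_le, lt_trans one_pos hp]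

lemma q_toReal (hp : 1 < p) : (ENNReal.ofReal p).toReal = p :=
  ENNReal.toReal_ofReal (lt_trans one_pos hp).le

lemma q_one_le (hp : 1 < p) : 1 ≤ ENNReal.ofReal p := by
  rw [ENNReal.one_le_ofReal]; exact hp.le

-- conversion: interval integral of f^p equals toReal of eLpNorm to the p
lemma integral_rpow_eq (hp : 1 < p) (f : Lp ℝ (ENNReal.ofReal p) mu01)
    (hf0 : ∀ᵐ s ∂mu01, 0 ≤ f s) {h : ℝ} (hh : h ∈ Ioc (0:ℝ) 1) :
    ∫ s in (0:ℝ)..h, (f : ℝ → ℝ) s ^ p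
      = ((eLpNorm f (ENNReal.ofReal p) (volume.restrict (Ioc (0:ℝ) h))).toReal) ^ p := by
  have hp0 : 0 < p := lt_trans one_pos hp
  set ν := volume.restrict (Ioc (0:ℝ) h) with hν
  have hmem : MemLp (f : ℝ → ℝ) (ENNReal.ofReal p) ν :=
    (Lp.memLp f).mono_measure (nu_le hh.2)
  have hlp := hmem.eLpNorm_eq_integral_rpow_norm (q_ne_zero hp) ENNReal.ofReal_ne_top
  rw [q_toReal hp] at hlp
  have hint_nonneg : 0 ≤ ∫ a, ‖(f : ℝ → ℝ) a‖ ^ p ∂ν :=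
    integral_nonneg fun a => Real.rpow_nonneg (norm_nonneg _) _
  rw [hlp, ENNReal.toReal_ofReal (Real.rpow_nonneg hint_nonneg _),
    Real.rpow_inv_rpow hint_nonneg hp0.ne']
  rw [intervalIntegral.integral_of_le hh.1.le]
  refine integral_congr_ae ?_
  filter_upwards [ae_nu hh.2 hf0] with s hs
  rw [Real.norm_of_nonneg hs]
end aux

section cont
variable {p : ℝ} [Fact (1 ≤ ENNReal.ofReal p)]

lemma sub_eLpNorm_le (hp : 1 < p) (f g : Lp ℝ (ENNReal.ofReal p) mu01) {h : ℝ} (hh : h ≤ 1) :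
    eLpNorm ((f : ℝ → ℝ) - (g : ℝ → ℝ)) (ENNReal.ofReal p) (volume.restrict (Ioc (0:ℝ) h))
      ≤ ENNReal.ofReal ‖f - g‖ := by
  calc eLpNorm ((f : ℝ → ℝ) - (g : ℝ → ℝ)) (ENNReal.ofReal p) (volume.restrict (Ioc (0:ℝ) h))
      ≤ eLpNorm ((f : ℝ → ℝ) - (g : ℝ → ℝ)) (ENNReal.ofReal p) mu01 :=
        eLpNorm_mono_measure _ (nu_le hh)
    _ = eLpNorm ((f - g : Lp ℝ (ENNReal.ofReal p) mu01) : ℝ → ℝ) (ENNReal.ofReal p) mu01 :=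
        eLpNorm_congr_ae (Lp.coeFn_sub f g).symm
    _ = ENNReal.ofReal ‖f - g‖ := by
        rw [Lp.norm_def, ENNReal.ofReal_toReal (Lp.eLpNorm_ne_top _)]

lemma Phi_le (hp : 1 < p) (f g : Lp ℝ (ENNReal.ofReal p) mu01) {h : ℝ} (hh : h ≤ 1) :
    (eLpNorm (f : ℝ → ℝ) (ENNReal.ofReal p) (volume.restrict (Ioc (0:ℝ) h))).toReal
      ≤ (eLpNorm (g : ℝ → ℝ) (ENNReal.ofReal p) (volume.restrict (Ioc (0:ℝ) h))).toReal
        + ‖f - g‖ := by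
  set ν := volume.restrict (Ioc (0:ℝ) h) with hν
  have hgm : AEStronglyMeasurable (g : ℝ → ℝ) ν :=
    ((Lp.memLp g).mono_measure (nu_le hh)).aestronglyMeasurable
  have hfm : AEStronglyMeasurable (f : ℝ → ℝ) ν :=
    ((Lp.memLp f).mono_measure (nu_le hh)).aestronglyMeasurable
  have h1 : eLpNorm (f : ℝ → ℝ) (ENNReal.ofReal p) ν
      ≤ eLpNorm (g : ℝ → ℝ) (ENNReal.ofReal p) ν + ENNReal.ofReal ‖f - g‖ := by
    have : (f : ℝ → ℝ) = (g : ℝ → ℝ) + ((f : ℝ → ℝ) - (g : ℝ → ℝ)) := by ring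
    calc eLpNorm (f : ℝ → ℝ) (ENNReal.ofReal p) ν
        = eLpNorm ((g : ℝ → ℝ) + ((f : ℝ → ℝ) - (g : ℝ → ℝ))) (ENNReal.ofReal p) ν := by
          rw [← this]
      _ ≤ eLpNorm (g : ℝ → ℝ) (ENNReal.ofReal p) ν
            + eLpNorm ((f : ℝ → ℝ) - (g : ℝ → ℝ)) (ENNReal.ofReal p) ν :=
          eLpNorm_add_le hgm (hfm.sub hgm) (q_one_le hp)
      _ ≤ _ := by gcongr; exact sub_eLpNorm_le hp f g hh
  have hfin : eLpNorm (g : ℝ → ℝ) (ENNReal.ofReal p) ν + ENNReal.ofReal ‖f - g‖ ≠ ⊤ := by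
    refine ENNReal.add_ne_top.2 ⟨?_, ENNReal.ofReal_ne_top⟩
    exact (((Lp.memLp g).mono_measure (nu_le hh)).2).ne
  calc (eLpNorm (f : ℝ → ℝ) (ENNReal.ofReal p) ν).toReal
      ≤ (eLpNorm (g : ℝ → ℝ) (ENNReal.ofReal p) ν + ENNReal.ofReal ‖f - g‖).toReal :=
        ENNReal.toReal_mono hfin h1
    _ = _ := by
        rw [ENNReal.toReal_add (((Lp.memLp g).mono_measure (nu_le hh)).2).ne
          ENNReal.ofReal_ne_top, ENNReal.toReal_ofReal (norm_nonneg (f - g))]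
end cont

section psi
variable {p : ℝ} [Fact (1 ≤ ENNReal.ofReal p)]

lemma integrable_nu (hp : 1 < p) (f : Lp ℝ (ENNReal.ofReal p) mu01) {h : ℝ} (hh : h ≤ 1) :
    Integrable (f : ℝ → ℝ) (volume.restrict (Ioc (0:ℝ) h)) := by
  haveI := nu_fin h
  exact ((Lp.memLp f).mono_measure (nu_le hh)).integrable (q_one_le hp)

lemma Psi_sub_le (hp : 1 < p) (f g : Lp ℝ (ENNReal.ofReal p) mu01) {h : ℝ} (hh : h ∈ Ioc (0:ℝ) 1) :
    |(∫ s in (0:ℝ)..h, (f : ℝ → ℝ) s) - ∫ s in (0:ℝ)..h, (g : ℝ → ℝ) s| ≤ ‖f - g‖ := by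
  haveI := nu_fin h
  set ν := volume.restrict (Ioc (0:ℝ) h) with hν
  set u : ℝ → ℝ := (f : ℝ → ℝ) - (g : ℝ → ℝ) with hu
  have hum : MemLp u (ENNReal.ofReal p) ν :=
    (((Lp.memLp f).mono_measure (nu_le hh.2)).sub ((Lp.memLp g).mono_measure (nu_le hh.2)))
  have hum1 : MemLp u 1 ν := hum.mono_exponent (q_one_le hp)
  have heq : (∫ s in (0:ℝ)..h, (f : ℝ → ℝ) s) - ∫ s in (0:ℝ)..h, (g : ℝ → ℝ) s
      = ∫ a, u a ∂ν := by
    rw [intervalIntegral.integral_of_le hh.1.le, intervalIntegral.integral_of_le hh.1.le,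
      ← integral_sub (integrable_nu hp f hh.2) (integrable_nu hp g hh.2)]
    rfl
  rw [heq]
  have h2 : ∫ a, ‖u a‖ ∂ν = (eLpNorm u 1 ν).toReal := by
    rw [hum1.eLpNorm_eq_integral_rpow_norm one_ne_zero ENNReal.one_ne_top]
    simp only [ENNReal.toReal_one, Real.rpow_one, inv_one]
    rw [ENNReal.toReal_ofReal (integral_nonneg fun a => norm_nonneg _)]
  have h3 : eLpNorm u 1 ν ≤ eLpNorm u (ENNReal.ofReal p) ν := by
    have := eLpNorm_le_eLpNorm_mul_rpow_measure_univ (q_one_le hp) hum.aestronglyMeasurable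
    refine this.trans ?_
    have hmu : ν Set.univ ≤ 1 := by
      rw [hν, Measure.restrict_apply_univ, Real.volume_Ioc, sub_zero]
      exact ENNReal.ofReal_le_one.2 hh.2
    have hexp : 0 ≤ 1 / (1:ℝ≥0∞).toReal - 1 / (ENNReal.ofReal p).toReal := by
      rw [ENNReal.toReal_one, q_toReal hp]
      simp only [one_div]
      rw [sub_nonneg]
      simpa using inv_le_one_of_one_le₀ hp.le
    calc eLpNorm u (ENNReal.ofReal p) ν * ν Set.univ ^ (1 / (1:ℝ≥0∞).toReal - 1 / (ENNReal.ofReal p).toReal)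
        ≤ eLpNorm u (ENNReal.ofReal p) ν * 1 := by
          gcongr
          exact ENNReal.rpow_le_one hmu hexp
      _ = eLpNorm u (ENNReal.ofReal p) ν := mul_one _
  calc |∫ a, u a ∂ν| ≤ ∫ a, ‖u a‖ ∂ν := by
        rw [← Real.norm_eq_abs]; exact norm_integral_le_integral_norm u
    _ = (eLpNorm u 1 ν).toReal := h2
    _ ≤ (ENNReal.ofReal ‖f - g‖).toReal := by
        refine ENNReal.toReal_mono ENNReal.ofReal_ne_top ?_
        exact h3.trans (sub_eLpNorm_le hp f g hh.2)
    _ = ‖f - g‖ := ENNReal.toReal_ofReal (norm_nonneg _)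
end psi

section mink
variable {p : ℝ} [Fact (1 ≤ ENNReal.ofReal p)]

lemma combo_coeFn (f g : Lp ℝ (ENNReal.ofReal p) mu01) (a b : ℝ) :
    ((a • f + b • g : Lp ℝ (ENNReal.ofReal p) mu01) : ℝ → ℝ)
      =ᵐ[mu01] a • (f : ℝ → ℝ) + b • (g : ℝ → ℝ) := by
  filter_upwards [Lp.coeFn_add (a • f) (b • g), Lp.coeFn_smul a f, Lp.coeFn_smul b g]
    with s h1 h2 h3
  simp only [h1, Pi.add_apply, h2, h3]

lemma mink (hp : 1 < p) (f g : Lp ℝ (ENNReal.ofReal p) mu01) {a b : ℝ} (ha : 0 ≤ a) (hb : 0 ≤ b)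
    {h : ℝ} (hh : h ≤ 1) :
    (eLpNorm ((a • f + b • g : Lp ℝ (ENNReal.ofReal p) mu01) : ℝ → ℝ) (ENNReal.ofReal p)
        (volume.restrict (Ioc (0:ℝ) h))).toReal
      ≤ a * (eLpNorm (f : ℝ → ℝ) (ENNReal.ofReal p) (volume.restrict (Ioc (0:ℝ) h))).toReal
        + b * (eLpNorm (g : ℝ → ℝ) (ENNReal.ofReal p) (volume.restrict (Ioc (0:ℝ) h))).toReal := by
  set ν := volume.restrict (Ioc (0:ℝ) h) with hν
  have hfm : AEStronglyMeasurable (f : ℝ → ℝ) ν :=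
    ((Lp.memLp f).mono_measure (nu_le hh)).aestronglyMeasurable
  have hgm : AEStronglyMeasurable (g : ℝ → ℝ) ν :=
    ((Lp.memLp g).mono_measure (nu_le hh)).aestronglyMeasurable
  have hfin : eLpNorm (f : ℝ → ℝ) (ENNReal.ofReal p) ν ≠ ⊤ :=
    (((Lp.memLp f).mono_measure (nu_le hh)).2).ne
  have hgfin : eLpNorm (g : ℝ → ℝ) (ENNReal.ofReal p) ν ≠ ⊤ :=
    (((Lp.memLp g).mono_measure (nu_le hh)).2).ne
  have h1 : eLpNorm ((a • f + b • g : Lp ℝ (ENNReal.ofReal p) mu01) : ℝ → ℝ) (ENNReal.ofReal p) ν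
      ≤ (‖a‖₊ : ℝ≥0∞) * eLpNorm (f : ℝ → ℝ) (ENNReal.ofReal p) ν
        + (‖b‖₊ : ℝ≥0∞) * eLpNorm (g : ℝ → ℝ) (ENNReal.ofReal p) ν := by
    rw [eLpNorm_congr_ae (ae_nu hh (combo_coeFn f g a b))]
    calc eLpNorm (a • (f : ℝ → ℝ) + b • (g : ℝ → ℝ)) (ENNReal.ofReal p) ν
        ≤ eLpNorm (a • (f : ℝ → ℝ)) (ENNReal.ofReal p) ν
          + eLpNorm (b • (g : ℝ → ℝ)) (ENNReal.ofReal p) ν :=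
          eLpNorm_add_le (hfm.const_smul a) (hgm.const_smul b) (q_one_le hp)
      _ = _ := by rw [eLpNorm_const_smul, eLpNorm_const_smul]; rfl
  have hfin2 : (‖a‖₊ : ℝ≥0∞) * eLpNorm (f : ℝ → ℝ) (ENNReal.ofReal p) ν
      + (‖b‖₊ : ℝ≥0∞) * eLpNorm (g : ℝ → ℝ) (ENNReal.ofReal p) ν ≠ ⊤ := by
    refine ENNReal.add_ne_top.2 ⟨?_, ?_⟩ <;>
      exact ENNReal.mul_ne_top ENNReal.coe_ne_top (by assumption)
  refine (ENNReal.toReal_mono hfin2 h1).trans (le_of_eq ?_)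
  rw [ENNReal.toReal_add (ENNReal.mul_ne_top ENNReal.coe_ne_top hfin)
    (ENNReal.mul_ne_top ENNReal.coe_ne_top hgfin), ENNReal.toReal_mul, ENNReal.toReal_mul]
  simp [Real.norm_of_nonneg ha, Real.norm_of_nonneg hb]
end mink

section more
variable {p : ℝ} [Fact (1 ≤ ENNReal.ofReal p)]

lemma Psi_nonneg (f : Lp ℝ (ENNReal.ofReal p) mu01) (hf0 : ∀ᵐ s ∂mu01, 0 ≤ f s)
    {h : ℝ} (hh : h ∈ Ioc (0:ℝ) 1) : 0 ≤ ∫ s in (0:ℝ)..h, (f : ℝ → ℝ) s := by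
  rw [intervalIntegral.integral_of_le hh.1.le]
  exact integral_nonneg_of_ae (ae_nu hh.2 hf0)

set_option maxHeartbeats 1000000 in
lemma combo_integral (hp : 1 < p) (f g : Lp ℝ (ENNReal.ofReal p) mu01) (a b : ℝ)
    {h : ℝ} (hh : h ∈ Ioc (0:ℝ) 1) :
    ∫ s in (0:ℝ)..h, ((a • f + b • g : Lp ℝ (ENNReal.ofReal p) mu01) : ℝ → ℝ) s
      = a * (∫ s in (0:ℝ)..h, (f : ℝ → ℝ) s) + b * ∫ s in (0:ℝ)..h, (g : ℝ → ℝ) s := by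
  rw [intervalIntegral.integral_of_le hh.1.le, intervalIntegral.integral_of_le hh.1.le,
    intervalIntegral.integral_of_le hh.1.le]
  rw [integral_congr_ae (ae_nu hh.2 (combo_coeFn f g a b))]
  simp only [Pi.add_apply, Pi.smul_apply, smul_eq_mul]
  rw [integral_add ((integrable_nu hp f hh.2).const_mul a) ((integrable_nu hp g hh.2).const_mul b),
    MeasureTheory.integral_const_mul, MeasureTheory.integral_const_mul]

lemma R_le {A : ℝ} (hp : 1 < p) (hA : 0 < A) (f : Lp ℝ (ENNReal.ofReal p) mu01)
    (hf0 : ∀ᵐ s ∂mu01, 0 ≤ f s) {h : ℝ} (hh : h ∈ Ioc (0:ℝ) 1)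
    (hf2 : (1 / h) * ∫ s in (0:ℝ)..h, (f : ℝ → ℝ) s ^ p
      ≤ A * ((1 / h) * ∫ s in (0:ℝ)..h, (f : ℝ → ℝ) s) ^ p) :
    (eLpNorm (f : ℝ → ℝ) (ENNReal.ofReal p) (volume.restrict (Ioc (0:ℝ) h))).toReal
      ≤ (A * h) ^ p⁻¹ * ((1 / h) * ∫ s in (0:ℝ)..h, (f : ℝ → ℝ) s) := by
  have hp0 : 0 < p := lt_trans one_pos hp
  have hh0 : 0 < h := hh.1
  set Rf := (eLpNorm (f : ℝ → ℝ) (ENNReal.ofReal p) (volume.restrict (Ioc (0:ℝ) h))).toReal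
  set If := ∫ s in (0:ℝ)..h, (f : ℝ → ℝ) s with hIf
  have hRf0 : 0 ≤ Rf := ENNReal.toReal_nonneg
  have hIf0 : 0 ≤ (1 / h) * If := mul_nonneg (by positivity) (Psi_nonneg f hf0 hh)
  have h1 : Rf ^ p ≤ (A * h) * ((1 / h) * If) ^ p := by
    rw [integral_rpow_eq hp f hf0 hh] at hf2
    calc Rf ^ p = h * ((1 / h) * Rf ^ p) := by field_simp
      _ ≤ h * (A * ((1 / h) * If) ^ p) := mul_le_mul_of_nonneg_left hf2 hh0.le
      _ = (A * h) * ((1 / h) * If) ^ p := by ring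
  calc Rf = (Rf ^ p) ^ p⁻¹ := (Real.rpow_rpow_inv hRf0 hp0.ne').symm
    _ ≤ ((A * h) * ((1 / h) * If) ^ p) ^ p⁻¹ :=
        Real.rpow_le_rpow (Real.rpow_nonneg hRf0 _) h1 (inv_nonneg.2 hp0.le)
    _ = (A * h) ^ p⁻¹ * ((1 / h) * If) := by
        rw [Real.mul_rpow (by positivity) (Real.rpow_nonneg hIf0 _),
          Real.rpow_rpow_inv hIf0 hp0.ne']
end more

/-- `𝓔` is convex, closed and bounded in `L^p(0,1)`. -/
theorem calE_convex_closed_bounded (A p : ℝ) (hA : 1 < A) (hp : 1 < p)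
    [Fact (1 ≤ ENNReal.ofReal p)] :
    Convex ℝ (calE A p) ∧ IsClosed (calE A p) ∧ Bornology.IsBounded (calE A p) := by
  have hp0 : 0 < p := lt_trans one_pos hp
  have hA0 : 0 < A := lt_trans one_pos hA
  refine ⟨?_, ?_, ?_⟩
  · -- Convexity
    intro f hf g hg a b ha hb hab
    obtain ⟨hf0, hf1, hf2⟩ := hf
    obtain ⟨hg0, hg1, hg2⟩ := hg
    have hw0 : ∀ᵐ s ∂mu01, 0 ≤ ((a • f + b • g : Lp ℝ (ENNReal.ofReal p) mu01) : ℝ → ℝ) s := by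
      filter_upwards [combo_coeFn f g a b, hf0, hg0] with s h1 h2 h3
      rw [h1]
      simp only [Pi.add_apply, Pi.smul_apply, smul_eq_mul]
      positivity
    refine ⟨hw0, ?_, ?_⟩
    · calc ‖a • f + b • g‖ ≤ ‖a • f‖ + ‖b • g‖ := norm_add_le _ _
        _ = a * ‖f‖ + b * ‖g‖ := by
            rw [norm_smul, norm_smul, Real.norm_of_nonneg ha, Real.norm_of_nonneg hb]
        _ ≤ a * 1 + b * 1 := by gcongr
        _ = 1 := by linarith
    · intro h hh
      set w : Lp ℝ (ENNReal.ofReal p) mu01 := a • f + b • g with hwdef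
      have hIw0 : 0 ≤ (1 / h) * ∫ s in (0:ℝ)..h, (w : ℝ → ℝ) s :=
        mul_nonneg (one_div_nonneg.2 hh.1.le) (Psi_nonneg w hw0 hh)
      have hAh0 : 0 ≤ A * h := mul_nonneg hA0.le hh.1.le
      have hK0 : 0 ≤ (A * h) ^ p⁻¹ := Real.rpow_nonneg hAh0 _
      have key : (eLpNorm (w : ℝ → ℝ) (ENNReal.ofReal p) (volume.restrict (Ioc (0:ℝ) h))).toReal
          ≤ (A * h) ^ p⁻¹ * ((1 / h) * ∫ s in (0:ℝ)..h, (w : ℝ → ℝ) s) := by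
        calc (eLpNorm (w : ℝ → ℝ) (ENNReal.ofReal p) (volume.restrict (Ioc (0:ℝ) h))).toReal
            ≤ a * (eLpNorm (f : ℝ → ℝ) (ENNReal.ofReal p)
                  (volume.restrict (Ioc (0:ℝ) h))).toReal
              + b * (eLpNorm (g : ℝ → ℝ) (ENNReal.ofReal p)
                  (volume.restrict (Ioc (0:ℝ) h))).toReal := mink hp f g ha hb hh.2
          _ ≤ a * ((A * h) ^ p⁻¹ * ((1 / h) * ∫ s in (0:ℝ)..h, (f : ℝ → ℝ) s))
              + b * ((A * h) ^ p⁻¹ * ((1 / h) * ∫ s in (0:ℝ)..h, (g : ℝ → ℝ) s)) :=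
              add_le_add
                (mul_le_mul_of_nonneg_left (R_le hp hA0 f hf0 hh (hf2 h hh)) ha)
                (mul_le_mul_of_nonneg_left (R_le hp hA0 g hg0 hh (hg2 h hh)) hb)
          _ = (A * h) ^ p⁻¹ * ((1 / h) *
                (a * (∫ s in (0:ℝ)..h, (f : ℝ → ℝ) s) + b * ∫ s in (0:ℝ)..h, (g : ℝ → ℝ) s)) := by
              ring
          _ = (A * h) ^ p⁻¹ * ((1 / h) * ∫ s in (0:ℝ)..h, (w : ℝ → ℝ) s) := by
              rw [← combo_integral hp f g a b hh]
      rw [integral_rpow_eq hp w hw0 hh]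
      calc (1 / h) * (eLpNorm (w : ℝ → ℝ) (ENNReal.ofReal p)
              (volume.restrict (Ioc (0:ℝ) h))).toReal ^ p
          ≤ (1 / h) * ((A * h) ^ p⁻¹ * ((1 / h) * ∫ s in (0:ℝ)..h, (w : ℝ → ℝ) s)) ^ p := by
            refine mul_le_mul_of_nonneg_left ?_ (one_div_nonneg.2 hh.1.le)
            exact Real.rpow_le_rpow ENNReal.toReal_nonneg key hp0.le
        _ = (1 / h) * (((A * h) ^ p⁻¹) ^ p * ((1 / h) * ∫ s in (0:ℝ)..h, (w : ℝ → ℝ) s) ^ p) := by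
            rw [Real.mul_rpow hK0 hIw0]
        _ = (1 / h) * ((A * h) * ((1 / h) * ∫ s in (0:ℝ)..h, (w : ℝ → ℝ) s) ^ p) := by
            rw [Real.rpow_inv_rpow hAh0 hp0.ne']
        _ = A * ((1 / h) * ∫ s in (0:ℝ)..h, (w : ℝ → ℝ) s) ^ p := by
            have : h ≠ 0 := hh.1.ne'
            field_simp
  · -- Closedness
    have hset : calE A p = {f : Lp ℝ (ENNReal.ofReal p) mu01 | 0 ≤ f}
        ∩ ({f : Lp ℝ (ENNReal.ofReal p) mu01 | ‖f‖ ≤ 1} ∩ ⋂ h ∈ Ioc (0:ℝ) 1,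
            {f : Lp ℝ (ENNReal.ofReal p) mu01 |
              (1 / h) * ((eLpNorm (f : ℝ → ℝ) (ENNReal.ofReal p)
                  (volume.restrict (Ioc (0:ℝ) h))).toReal) ^ p
                ≤ A * ((1 / h) * ∫ s in (0:ℝ)..h, (f : ℝ → ℝ) s) ^ p}) := by
      ext f
      simp only [calE, mem_setOf_eq, mem_inter_iff, mem_iInter]
      constructor
      · rintro ⟨h0, h1, h2⟩
        refine ⟨(Lp.coeFn_nonneg f).1 h0, h1, fun h hh => ?_⟩
        rw [← integral_rpow_eq hp f h0 hh]
        exact h2 h hh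
      · rintro ⟨h0, h1, h2⟩
        have h0' : ∀ᵐ s ∂mu01, 0 ≤ f s := (Lp.coeFn_nonneg f).2 h0
        refine ⟨h0', h1, fun h hh => ?_⟩
        rw [integral_rpow_eq hp f h0' hh]
        exact h2 h hh
    rw [hset]
    refine IsClosed.inter isClosed_nonneg (IsClosed.inter ?_ ?_)
    · exact isClosed_le continuous_norm continuous_const
    · refine isClosed_biInter fun h hh => ?_
      have contPhi : Continuous fun f : Lp ℝ (ENNReal.ofReal p) mu01 =>
          (eLpNorm (f : ℝ → ℝ) (ENNReal.ofReal p) (volume.restrict (Ioc (0:ℝ) h))).toReal := by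
        refine LipschitzWith.continuous (K := 1) (LipschitzWith.of_dist_le_mul fun f g => ?_)
        rw [NNReal.coe_one, one_mul, Real.dist_eq, dist_eq_norm, abs_sub_le_iff]
        constructor
        · linarith [Phi_le hp f g hh.2]
        · have := Phi_le hp g f hh.2
          rw [norm_sub_rev] at this
          linarith
      have contPsi : Continuous fun f : Lp ℝ (ENNReal.ofReal p) mu01 =>
          ∫ s in (0:ℝ)..h, (f : ℝ → ℝ) s := by
        refine LipschitzWith.continuous (K := 1) (LipschitzWith.of_dist_le_mul fun f g => ?_)
        rw [NNReal.coe_one, one_mul, Real.dist_eq, dist_eq_norm]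
        exact Psi_sub_le hp f g hh
      have contr : Continuous fun x : ℝ => x ^ p := by
        rw [continuous_iff_continuousAt]
        exact fun x => Real.continuousAt_rpow_const x p (Or.inr hp0.le)
      exact isClosed_le
        (continuous_const.mul (contr.comp contPhi))
        (continuous_const.mul (contr.comp (continuous_const.mul contPsi)))
  · -- Boundedness
    refine (Metric.isBounded_closedBall (x := (0 : Lp ℝ (ENNReal.ofReal p) mu01)) (r := 1)).subset
      fun f hf => ?_
    rw [Metric.mem_closedBall, dist_zero_right]
    exact hf.2.1
end
end
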